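/- arXiv:1410.2523 — 4 statements merged into one kernel-verified Lean document; each statement's English description precedes it below -/
import Mathlib

section
/- Let f : ℝ^d → ℝ≥0 be an even function with f(0)=0. The function z ↦ exp(-c·f(z)) is positive semidefinite for every c > 0 if and only if the kernel A_f(z_1,z_2) = f(z_1) + f(z_2) - f(z_1 - z_2) is positive semidefinite. -/
open Finset Filter

/-- Schur product theorem, quadratic-form version. -/
lemma schurQF {k : ℕ} (M N : Fin k → Fin k → ℝ)
    (hMsym : ∀ i j, M i j = M j i)
    (hM : ∀ t : Fin k → ℝ, 0 ≤ ∑ i, ∑ j, M i j * t i * t j)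
    (hN : ∀ t : Fin k → ℝ, 0 ≤ ∑ i, ∑ j, N i j * t i * t j)
    (t : Fin k → ℝ) : 0 ≤ ∑ i, ∑ j, M i j * N i j * t i * t j := by
  have hpsd : (Matrix.of M).PosSemidef := by
    rw [Matrix.posSemidef_iff_dotProduct_mulVec]
    constructor
    · ext i j
      simp [Matrix.conjTranspose, hMsym i j]
    · intro x
      have := hM x
      simp only [dotProduct, Matrix.mulVec, star_trivial]
      calc (0:ℝ) ≤ ∑ i, ∑ j, M i j * x i * x j := hM x
        _ = ∑ i, x i * ∑ j, M i j * x j := by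
            congr 1; ext i; rw [Finset.mul_sum]; congr 1; ext j; ring
  obtain ⟨B, hB⟩ : ∃ B : Matrix (Fin k) (Fin k) ℝ, Matrix.of M = B.conjTranspose * B := by
    open scoped MatrixOrder in
    exact ⟨CFC.sqrt (Matrix.of M), by
      rw [← Matrix.star_eq_conjTranspose, (IsSelfAdjoint.of_nonneg (CFC.sqrt_nonneg _)).star_eq,
        CFC.sqrt_mul_sqrt_self _ (Matrix.nonneg_iff_posSemidef.mpr hpsd)]⟩
  have hMij : ∀ i j, M i j = ∑ r, B r i * B r j := by
    intro i j
    have : Matrix.of M i j = (B.conjTranspose * B) i j := by rw [hB]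
    simpa [Matrix.mul_apply, Matrix.conjTranspose_apply] using this
  calc (0:ℝ) ≤ ∑ r, ∑ i, ∑ j, N i j * (B r i * t i) * (B r j * t j) := by
        exact Finset.sum_nonneg fun r _ => hN fun i => B r i * t i
    _ = ∑ i, ∑ j, M i j * N i j * t i * t j := by
        rw [Finset.sum_comm]
        refine Finset.sum_congr rfl fun i _ => ?_
        rw [Finset.sum_comm]
        refine Finset.sum_congr rfl fun j _ => ?_
        rw [hMij i j]
        simp only [Finset.sum_mul]
        exact Finset.sum_congr rfl fun r _ => by ring

lemma powQF {k : ℕ} (M : Fin k → Fin k → ℝ)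
    (hMsym : ∀ i j, M i j = M j i)
    (hM : ∀ t : Fin k → ℝ, 0 ≤ ∑ i, ∑ j, M i j * t i * t j) :
    ∀ (n : ℕ) (t : Fin k → ℝ), 0 ≤ ∑ i, ∑ j, (M i j) ^ n * t i * t j := by
  intro n
  induction n with
  | zero =>
    intro t
    have h : ∑ i, ∑ j, (M i j) ^ 0 * t i * t j = (∑ i, t i) ^ 2 := by
      rw [sq, Finset.sum_mul]
      refine Finset.sum_congr rfl fun i _ => ?_
      rw [Finset.mul_sum]
      exact Finset.sum_congr rfl fun j _ => by ring
    rw [h]; exact sq_nonneg _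
  | succ n ih =>
    intro t
    have h := schurQF M (fun i j => (M i j) ^ n) hMsym hM ih t
    have he : ∑ i, ∑ j, (M i j) ^ (n + 1) * t i * t j
        = ∑ i, ∑ j, M i j * (M i j) ^ n * t i * t j := by
      refine Finset.sum_congr rfl fun i _ => Finset.sum_congr rfl fun j _ => ?_
      rw [pow_succ]; ring
    rw [he]; exact h

lemma real_exp_tsum (x : ℝ) : Real.exp x = ∑' n : ℕ, x ^ n / n.factorial := by
  rw [Real.exp_eq_exp_ℝ, NormedSpace.exp_eq_tsum_div]

lemma expQF {k : ℕ} (M : Fin k → Fin k → ℝ)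
    (hMsym : ∀ i j, M i j = M j i)
    (hM : ∀ t : Fin k → ℝ, 0 ≤ ∑ i, ∑ j, M i j * t i * t j)
    (t : Fin k → ℝ) : 0 ≤ ∑ i, ∑ j, Real.exp (M i j) * t i * t j := by
  have hsummable : ∀ i j : Fin k, Summable (fun n : ℕ => (M i j) ^ n / n.factorial * (t i * t j)) :=
    fun i j => (Real.summable_pow_div_factorial (M i j)).mul_right _
  have key : ∑ i, ∑ j, Real.exp (M i j) * t i * t j
      = ∑' n : ℕ, ∑ i, ∑ j, (M i j) ^ n / n.factorial * (t i * t j) := by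
    calc ∑ i, ∑ j, Real.exp (M i j) * t i * t j
        = ∑ i, ∑ j, ∑' n : ℕ, (M i j) ^ n / n.factorial * (t i * t j) := by
          refine Finset.sum_congr rfl fun i _ => Finset.sum_congr rfl fun j _ => ?_
          rw [real_exp_tsum, ← tsum_mul_right, ← tsum_mul_right]
          exact tsum_congr fun n => mul_assoc _ _ _
      _ = ∑ i, ∑' n : ℕ, ∑ j, (M i j) ^ n / n.factorial * (t i * t j) := by
          refine Finset.sum_congr rfl fun i _ => ?_
          exact (Summable.tsum_finsetSum (fun j _ => hsummable i j)).symm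
      _ = ∑' n : ℕ, ∑ i, ∑ j, (M i j) ^ n / n.factorial * (t i * t j) :=
          (Summable.tsum_finsetSum (fun i _ => summable_sum (fun j _ => hsummable i j))).symm
  rw [key]
  refine tsum_nonneg fun n => ?_
  have h := powQF M hMsym hM n t
  have : ∑ i, ∑ j, (M i j) ^ n / n.factorial * (t i * t j)
      = (1 / n.factorial) * ∑ i, ∑ j, (M i j) ^ n * t i * t j := by
    rw [Finset.mul_sum]
    refine Finset.sum_congr rfl fun i _ => ?_
    rw [Finset.mul_sum]
    exact Finset.sum_congr rfl fun j _ => by ring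
  rw [this]
  positivity

lemma slopeLimit (a : ℝ) :
    Tendsto (fun c : ℝ => (Real.exp (-c * a) - 1) / c) (nhdsWithin 0 (Set.Ioi 0)) (nhds (-a)) := by
  have h1 : HasDerivAt (fun c : ℝ => -c * a) (-a) 0 := by
    simpa using ((hasDerivAt_id (0:ℝ)).neg.mul_const a)
  have h2 : HasDerivAt (fun c : ℝ => Real.exp (-c * a)) (-a) 0 := by
    simpa using h1.exp
  have h3 := hasDerivAt_iff_tendsto_slope.mp h2
  have h4 : Tendsto (slope (fun c : ℝ => Real.exp (-c * a)) 0)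
      (nhdsWithin 0 (Set.Ioi 0)) (nhds (-a)) :=
    h3.mono_left (nhdsWithin_mono 0 fun x hx => (ne_of_gt hx : x ≠ 0))
  refine h4.congr fun c => ?_
  simp [slope_def_field, div_eq_div_iff]

theorem stmt1 {d : ℕ} (f : EuclideanSpace ℝ (Fin d) → ℝ)
    (hf_nonneg : ∀ z, 0 ≤ f z) (hf_even : ∀ z, f (-z) = f z) (hf_zero : f 0 = 0) :
    (∀ c : ℝ, 0 < c → ∀ (k : ℕ) (z : Fin k → EuclideanSpace ℝ (Fin d)) (t : Fin k → ℝ),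
        0 ≤ ∑ i, ∑ j, Real.exp (-c * f (z i - z j)) * t i * t j) ↔
      (∀ (k : ℕ) (z : Fin k → EuclideanSpace ℝ (Fin d)) (t : Fin k → ℝ),
        0 ≤ ∑ i, ∑ j, (f (z i) + f (z j) - f (z i - z j)) * t i * t j) := by
  constructor
  · intro hE k z t
    set z' : Fin (k+1) → EuclideanSpace ℝ (Fin d) := Fin.cons 0 z with hz'
    set t' : Fin (k+1) → ℝ := Fin.cons (-∑ i, t i) t with ht'
    have hsum0 : ∑ i, t' i = 0 := by
      rw [ht', Fin.sum_cons]; ring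
    -- the function whose limit we take
    set F : ℝ → ℝ := fun c => ∑ i, ∑ j, ((Real.exp (-c * f (z' i - z' j)) - 1) / c) * t' i * t' j
      with hF
    set L : ℝ := ∑ i, ∑ j, (-(f (z' i - z' j))) * t' i * t' j with hL
    have htend : Tendsto F (nhdsWithin 0 (Set.Ioi 0)) (nhds L) := by
      rw [hF, hL]
      refine tendsto_finset_sum _ fun i _ => tendsto_finset_sum _ fun j _ => ?_
      exact ((slopeLimit (f (z' i - z' j))).mul_const _).mul_const _
    have hFnonneg : ∀ᶠ c in nhdsWithin 0 (Set.Ioi 0), 0 ≤ F c := by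
      filter_upwards [self_mem_nhdsWithin] with c (hc : 0 < c)
      have h := hE c hc (k+1) z' t'
      have hexp : F c = (1 / c) * ∑ i, ∑ j, (Real.exp (-c * f (z' i - z' j)) - 1) * t' i * t' j := by
        rw [hF, Finset.mul_sum]
        refine Finset.sum_congr rfl fun i _ => ?_
        rw [Finset.mul_sum]
        exact Finset.sum_congr rfl fun j _ => by ring
      have hsplit : ∑ i, ∑ j, (Real.exp (-c * f (z' i - z' j)) - 1) * t' i * t' j
          = (∑ i, ∑ j, Real.exp (-c * f (z' i - z' j)) * t' i * t' j) - (∑ i, t' i) ^ 2 := by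
        rw [sq, Finset.sum_mul, ← Finset.sum_sub_distrib]
        refine Finset.sum_congr rfl fun i _ => ?_
        rw [Finset.mul_sum, ← Finset.sum_sub_distrib]
        exact Finset.sum_congr rfl fun j _ => by ring
      rw [hexp, hsplit, hsum0]
      have : (0:ℝ) ≤ (∑ i, ∑ j, Real.exp (-c * f (z' i - z' j)) * t' i * t' j) - 0 ^ 2 := by
        simpa using h
      positivity
    have hL0 : 0 ≤ L := ge_of_tendsto htend hFnonneg
    -- now identify L with the goal
    have hLid : L = ∑ i, ∑ j, (f (z i) + f (z j) - f (z i - z j)) * t i * t j := by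
      set T : ℝ := ∑ i, t i with hT
      set P : ℝ := ∑ i, f (z i) * t i with hP
      set Q : ℝ := ∑ i, ∑ j, f (z i - z j) * t i * t j with hQ
      have hRHS : ∑ i, ∑ j, (f (z i) + f (z j) - f (z i - z j)) * t i * t j
          = P * T + P * T - Q := by
        have key : ∀ i : Fin k, ∑ j, (f (z i) + f (z j) - f (z i - z j)) * t i * t j
            = f (z i) * t i * T + P * t i - ∑ j, f (z i - z j) * t i * t j := by
          intro i
          rw [hT, hP, Finset.mul_sum, Finset.sum_mul, ← Finset.sum_add_distrib,
            ← Finset.sum_sub_distrib]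
          exact Finset.sum_congr rfl fun j _ => by ring
        calc ∑ i, ∑ j, (f (z i) + f (z j) - f (z i - z j)) * t i * t j
            = ∑ i, (f (z i) * t i * T + P * t i - ∑ j, f (z i - z j) * t i * t j) :=
              Finset.sum_congr rfl fun i _ => key i
          _ = (∑ i, (f (z i) * t i * T + P * t i)) - Q := by rw [Finset.sum_sub_distrib, hQ]
          _ = (∑ i, f (z i) * t i * T) + (∑ i, P * t i) - Q := by rw [Finset.sum_add_distrib]
          _ = P * T + P * T - Q := by rw [← Finset.sum_mul, ← Finset.mul_sum, ← hP, ← hT]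
      have hL2 : L = P * T + P * T - Q := by
        rw [hL, hz', ht']
        simp only [Fin.sum_univ_succ, Fin.cons_zero, Fin.cons_succ, sub_zero, zero_sub, sub_self,
          hf_even, hf_zero]
        have e1 : ∑ j : Fin k, -f (z j) * -T * t j = P * T := by
          rw [hP, Finset.sum_mul]
          exact Finset.sum_congr rfl fun j _ => by ring
        have e2 : ∑ i : Fin k, (-f (z i) * t i * -T + ∑ j, -f (z i - z j) * t i * t j)
            = P * T - Q := by
          rw [Finset.sum_add_distrib]
          have e21 : ∑ i : Fin k, -f (z i) * t i * -T = P * T := by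
            rw [hP, Finset.sum_mul]
            exact Finset.sum_congr rfl fun i _ => by ring
          have e22 : ∑ i : Fin k, ∑ j, -f (z i - z j) * t i * t j = -Q := by
            rw [hQ, ← Finset.sum_neg_distrib]
            refine Finset.sum_congr rfl fun i _ => ?_
            rw [← Finset.sum_neg_distrib]
            exact Finset.sum_congr rfl fun j _ => by ring
          rw [e21, e22]; ring
        rw [e1, e2]
        ring
      rw [hL2, hRHS]
    rw [← hLid]; exact hL0
  · intro hA c hc k z t
    set M : Fin k → Fin k → ℝ := fun i j => c * (f (z i) + f (z j) - f (z i - z j)) with hM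
    have hMsym : ∀ i j, M i j = M j i := by
      intro i j
      have : f (z j - z i) = f (z i - z j) := by rw [← neg_sub (z i) (z j), hf_even]
      simp only [hM, this]; ring
    have hMqf : ∀ s : Fin k → ℝ, 0 ≤ ∑ i, ∑ j, M i j * s i * s j := by
      intro s
      have h := hA k z s
      calc (0:ℝ) ≤ c * ∑ i, ∑ j, (f (z i) + f (z j) - f (z i - z j)) * s i * s j :=
            mul_nonneg hc.le h
        _ = ∑ i, ∑ j, M i j * s i * s j := by
            rw [Finset.mul_sum]
            refine Finset.sum_congr rfl fun i _ => ?_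
            rw [Finset.mul_sum]
            exact Finset.sum_congr rfl fun j _ => by simp only [hM]; ring
    have key := expQF M hMsym hMqf (fun i => Real.exp (-c * f (z i)) * t i)
    calc (0:ℝ) ≤ ∑ i, ∑ j, Real.exp (M i j) * (Real.exp (-c * f (z i)) * t i) *
          (Real.exp (-c * f (z j)) * t j) := key
      _ = ∑ i, ∑ j, Real.exp (-c * f (z i - z j)) * t i * t j := by
          refine Finset.sum_congr rfl fun i _ => Finset.sum_congr rfl fun j _ => ?_
          have h1 : Real.exp (M i j) * Real.exp (-c * f (z i)) * Real.exp (-c * f (z j))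
              = Real.exp (-c * f (z i - z j)) := by
            rw [← Real.exp_add, ← Real.exp_add]
            congr 1
            simp only [hM]; ring
          calc Real.exp (M i j) * (Real.exp (-c * f (z i)) * t i) *
                (Real.exp (-c * f (z j)) * t j)
              = (Real.exp (M i j) * Real.exp (-c * f (z i)) * Real.exp (-c * f (z j)))
                * t i * t j := by ring
            _ = Real.exp (-c * f (z i - z j)) * t i * t j := by rw [h1]
end

section
/- For 0 < H < 1, the integral ∫_0^∞ (1 - cos t) t^(-2H-1) dt converges and equals π / (4 H Γ(2H) sin(Hπ)). -/
open MeasureTheory Real Set Filter Topology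

lemma laplace_one {x : ℝ} (hx : 0 < x) :
    ∫ t in Ioi (0:ℝ), Real.exp (-(x * t)) = 1 / x := by
  have h := integral_rpow_mul_exp_neg_mul_Ioi (a := 1) (r := x) one_pos hx
  simpa [Real.Gamma_one] using h

lemma exp_integrable {x : ℝ} (hx : 0 < x) :
    IntegrableOn (fun t : ℝ => Real.exp (-(x * t))) (Ioi (0:ℝ)) := by
  simpa [neg_mul] using exp_neg_integrableOn_Ioi 0 hx

lemma laplace_cos_integrable {x : ℝ} (hx : 0 < x) :
    IntegrableOn (fun t : ℝ => Real.cos t * Real.exp (-(x * t))) (Ioi (0:ℝ)) := by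
  refine (exp_integrable hx).mono' ?_ ?_
  · exact (Real.continuous_cos.mul (by continuity)).aestronglyMeasurable
  · filter_upwards with t
    rw [norm_mul, Real.norm_eq_abs, Real.norm_eq_abs, Real.abs_exp]
    nlinarith [Real.abs_cos_le_one t, Real.exp_pos (-(x*t)), abs_nonneg (Real.cos t)]

lemma hasDerivF (x : ℝ) (t : ℝ) :
    HasDerivAt (fun t : ℝ => Real.exp (-(x * t)) * (Real.sin t - x * Real.cos t) / (1 + x^2))
      (Real.cos t * Real.exp (-(x * t)) * (1 + x^2) / (1 + x^2)) t := by
  have h1 : HasDerivAt (fun t : ℝ => Real.exp (-(x * t))) (Real.exp (-(x*t)) * (-x)) t := by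
    have : HasDerivAt (fun t : ℝ => -(x * t)) (-x) t := by
      exact (((hasDerivAt_id t).const_mul x).neg).congr_deriv (by simp)
    exact (Real.hasDerivAt_exp _).comp t this
  have h2 : HasDerivAt (fun t : ℝ => Real.sin t - x * Real.cos t)
      (Real.cos t - x * (-Real.sin t)) t :=
    (Real.hasDerivAt_sin t).sub ((Real.hasDerivAt_cos t).const_mul x)
  have := (h1.mul h2).div_const (1 + x^2)
  refine this.congr_deriv ?_
  ring

lemma laplace_cos {x : ℝ} (hx : 0 < x) :
    ∫ t in Ioi (0:ℝ), Real.cos t * Real.exp (-(x * t)) = x / (1 + x^2) := by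
  have hx2 : (0:ℝ) < 1 + x^2 := by positivity
  set F : ℝ → ℝ := fun t => Real.exp (-(x * t)) * (Real.sin t - x * Real.cos t) / (1 + x^2)
    with hF
  have hderiv : ∀ t : ℝ, HasDerivAt F (Real.cos t * Real.exp (-(x * t))) t := by
    intro t
    have := hasDerivF x t
    rwa [mul_div_assoc, div_self hx2.ne', mul_one] at this
  have heval : ∀ b : ℝ, ∫ t in (0:ℝ)..b, Real.cos t * Real.exp (-(x * t)) = F b - F 0 := by
    intro b
    exact intervalIntegral.integral_eq_sub_of_hasDerivAt (fun t _ => hderiv t)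
      ((Real.continuous_cos.mul (by continuity)).intervalIntegrable 0 b)
  have h1 := intervalIntegral_tendsto_integral_Ioi 0 (laplace_cos_integrable hx) tendsto_id
  have hF0 : F 0 = -x / (1 + x^2) := by simp [hF]
  have hFlim : Tendsto F atTop (𝓝 0) := by
    have hglim : Tendsto (fun b : ℝ => Real.exp (-(x * b)) * (1 + x) / (1 + x^2)) atTop (𝓝 0) := by
      have : Tendsto (fun b : ℝ => Real.exp (-(x * b))) atTop (𝓝 0) := by
        apply Real.tendsto_exp_atBot.comp
        exact (tendsto_neg_atBot_iff.mpr (tendsto_id.const_mul_atTop hx))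
      simpa using (this.mul_const (1 + x)).div_const (1 + x^2)
    refine squeeze_zero_norm (fun b => ?_) hglim
    show ‖F b‖ ≤ _
    rw [Real.norm_eq_abs, hF]
    rw [abs_div, abs_of_pos hx2, div_le_div_iff_of_pos_right hx2, abs_mul, Real.abs_exp]
    have : |Real.sin b - x * Real.cos b| ≤ 1 + x := by
      calc |Real.sin b - x * Real.cos b| ≤ |Real.sin b| + |x * Real.cos b| := abs_sub _ _
        _ ≤ 1 + x := by
          rw [abs_mul, abs_of_pos hx]
          nlinarith [Real.abs_sin_le_one b, Real.abs_cos_le_one b, abs_nonneg (Real.cos b)]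
    nlinarith [Real.exp_pos (-(x*b))]
  have h2 : Tendsto (fun b => ∫ t in (0:ℝ)..b, Real.cos t * Real.exp (-(x * t))) atTop
      (𝓝 (x / (1 + x^2))) := by
    simp_rw [heval]
    have h := hFlim.sub_const (F 0)
    have : (0:ℝ) - F 0 = x / (1 + x^2) := by rw [hF0]; ring
    rw [this] at h
    exact h
  exact tendsto_nhds_unique h1 h2

lemma laplace_one_sub_cos_integrable {x : ℝ} (hx : 0 < x) :
    IntegrableOn (fun t : ℝ => (1 - Real.cos t) * Real.exp (-(x * t))) (Ioi (0:ℝ)) := by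
  have h := (exp_integrable hx).sub (laplace_cos_integrable hx)
  refine h.congr (Filter.Eventually.of_forall fun t => ?_)
  simp only [Pi.sub_apply]
  ring

lemma laplace_one_sub_cos {x : ℝ} (hx : 0 < x) :
    ∫ t in Ioi (0:ℝ), (1 - Real.cos t) * Real.exp (-(x * t)) = 1 / (x * (1 + x^2)) := by
  have heq : ∀ t : ℝ, (1 - Real.cos t) * Real.exp (-(x * t))
      = Real.exp (-(x * t)) - Real.cos t * Real.exp (-(x * t)) := fun t => by ring
  simp_rw [heq]
  rw [integral_sub (exp_integrable hx) (laplace_cos_integrable hx), laplace_one hx,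
    laplace_cos hx]
  have hx2 : (0:ℝ) < 1 + x^2 := by positivity
  field_simp
  ring

lemma int_J {H : ℝ} (h0 : 0 < H) (h1 : H < 1) :
    IntegrableOn (fun x : ℝ => x ^ (2*H-1) / (1 + x^2)) (Ioi (0:ℝ)) ∧
    ∫ x in Ioi (0:ℝ), x ^ (2*H-1) / (1 + x^2) = π / (2 * Real.sin (π * H)) := by
  set μ := volume.restrict (Ioi (0:ℝ)) with hμ
  set K : ℝ → ℝ → ℝ :=
    fun u x => Real.exp (-u) * (x ^ (2*H-1) * Real.exp (-u * x ^ (2:ℝ))) with hK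
  have hq : (-1:ℝ) < 2*H-1 := by linarith
  have h1H : (0:ℝ) < 1 - H := by linarith
  have hx2pow : ∀ x : ℝ, x ^ (2:ℝ) = x ^ 2 := fun x => by
    rw [show (2:ℝ) = ((2:ℕ):ℝ) by norm_num, Real.rpow_natCast]
  have hmeas : AEStronglyMeasurable (Function.uncurry K) (μ.prod μ) := by
    apply Measurable.aestronglyMeasurable
    fun_prop
  have hslice : ∀ u : ℝ, 0 < u → Integrable (fun x => K u x) μ := fun u hu =>
    ((integrableOn_rpow_mul_exp_neg_mul_rpow hq two_pos hu).const_mul _)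
  have hsliceval : ∀ u : ℝ, 0 < u →
      ∫ x, K u x ∂μ = Real.exp (-u) * u ^ (-H) * ((1/2) * Real.Gamma H) := by
    intro u hu
    have h := integral_rpow_mul_exp_neg_mul_rpow two_pos hq hu
    rw [show (2*H-1+1)/(2:ℝ) = H by ring, show -(2*H-1+1)/(2:ℝ) = -H by ring] at h
    rw [hK, hμ]
    simp only
    rw [MeasureTheory.integral_const_mul, h]
    ring
  have hnormval : ∀ u : ℝ, 0 < u →
      ∫ x, ‖K u x‖ ∂μ = Real.exp (-u) * u ^ (-H) * ((1/2) * Real.Gamma H) := by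
    intro u hu
    rw [← hsliceval u hu]
    refine setIntegral_congr_fun measurableSet_Ioi (fun x hx => ?_)
    rw [Real.norm_eq_abs, abs_of_nonneg]
    have : (0:ℝ) ≤ x ^ (2*H-1) := Real.rpow_nonneg (le_of_lt hx) _
    positivity
  have hprod : Integrable (Function.uncurry K) (μ.prod μ) := by
    rw [integrable_prod_iff hmeas]
    constructor
    · filter_upwards [ae_restrict_mem measurableSet_Ioi] with u hu
      exact hslice u hu
    · have hint : Integrable
          (fun u : ℝ => Real.exp (-u) * u ^ ((1-H)-1) * ((1/2) * Real.Gamma H)) μ :=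
        (Real.GammaIntegral_convergent h1H).mul_const _
      refine hint.congr ?_
      filter_upwards [ae_restrict_mem measurableSet_Ioi] with u hu
      simp only [Function.uncurry_apply_pair]
      rw [hnormval u hu, show (1-H)-1 = -H by ring]
  have hswap := MeasureTheory.integral_integral_swap hprod
  have hinner : ∀ x : ℝ, 0 < x →
      ∫ u, K u x ∂μ = x ^ (2*H-1) / (1 + x^2) := by
    intro x hx
    have hx2 : (0:ℝ) < 1 + x^2 := by positivity
    have hKeq : ∀ u : ℝ, K u x = x ^ (2*H-1) * Real.exp (-((1+x^2) * u)) := by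
      intro u
      rw [hK]
      simp only
      rw [hx2pow, show Real.exp (-u) * (x ^ (2*H-1) * Real.exp (-u * x^2))
        = x ^ (2*H-1) * (Real.exp (-u) * Real.exp (-u * x^2)) by ring, ← Real.exp_add]
      ring_nf
    simp_rw [hKeq]
    rw [hμ, MeasureTheory.integral_const_mul, laplace_one hx2, mul_one_div]
  have hLHS : ∫ u, (∫ x, K u x ∂μ) ∂μ = Real.Gamma (1-H) * ((1/2) * Real.Gamma H) := by
    rw [hμ, Real.Gamma_eq_integral h1H, ← MeasureTheory.integral_mul_const]
    refine setIntegral_congr_fun measurableSet_Ioi (fun u hu => ?_)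
    rw [hsliceval u hu, show (1-H)-1 = -H by ring]
  have hRHS : ∫ x, (∫ u, K u x ∂μ) ∂μ = ∫ x in Ioi (0:ℝ), x ^ (2*H-1) / (1 + x^2) := by
    rw [hμ]
    exact setIntegral_congr_fun measurableSet_Ioi (fun x hx => hinner x hx)
  have hval : ∫ x in Ioi (0:ℝ), x ^ (2*H-1) / (1 + x^2) = π / (2 * Real.sin (π * H)) := by
    rw [← hRHS, ← hswap, hLHS]
    rw [show Real.Gamma (1-H) * (1/2 * Real.Gamma H)
      = Real.Gamma H * Real.Gamma (1-H) / 2 by ring, Real.Gamma_mul_Gamma_one_sub H,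
      div_div, mul_comm (Real.sin (π * H)) 2]
  refine ⟨?_, hval⟩
  have hint2 : Integrable (fun x => ∫ u, K u x ∂μ) μ := hprod.integral_prod_right
  refine hint2.congr ?_
  filter_upwards [ae_restrict_mem measurableSet_Ioi] with x hx
  rw [hinner x hx]

theorem stmt2 (H : ℝ) (hH : H ∈ Set.Ioo (0 : ℝ) 1) :
    IntegrableOn (fun t : ℝ => (1 - Real.cos t) * t ^ (-2 * H - 1)) (Set.Ioi 0) ∧
    ∫ t in Set.Ioi (0 : ℝ), (1 - Real.cos t) * t ^ (-2 * H - 1)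
      = Real.pi / (4 * H * Real.Gamma (2 * H) * Real.sin (H * Real.pi)) := by
  obtain ⟨h0, h1⟩ := hH
  set μ := volume.restrict (Ioi (0:ℝ)) with hμ
  set G : ℝ → ℝ → ℝ :=
    fun x t => (1 - Real.cos t) * (x ^ (2*H) * Real.exp (-(x * t))) with hG
  have hΓpos : 0 < Real.Gamma (2*H+1) := Real.Gamma_pos_of_pos (by linarith)
  have hmeas : AEStronglyMeasurable (Function.uncurry G) (μ.prod μ) := by
    apply Measurable.aestronglyMeasurable
    fun_prop
  have hslice : ∀ x : ℝ, 0 < x → Integrable (fun t => G x t) μ := by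
    intro x hx
    have h := (laplace_one_sub_cos_integrable hx).const_mul (x ^ (2*H))
    refine h.congr (Filter.Eventually.of_forall fun t => ?_)
    rw [hG]; ring
  have hsliceval : ∀ x : ℝ, 0 < x → ∫ t, G x t ∂μ = x ^ (2*H-1) / (1 + x^2) := by
    intro x hx
    have hx2 : (0:ℝ) < 1 + x^2 := by positivity
    have heq : ∀ t : ℝ, G x t = x ^ (2*H) * ((1 - Real.cos t) * Real.exp (-(x * t))) := by
      intro t; rw [hG]; ring
    simp_rw [heq]
    rw [hμ, MeasureTheory.integral_const_mul, laplace_one_sub_cos hx,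
      Real.rpow_sub hx, Real.rpow_one]
    field_simp
  have hnormval : ∀ x : ℝ, 0 < x → ∫ t, ‖G x t‖ ∂μ = x ^ (2*H-1) / (1 + x^2) := by
    intro x hx
    rw [← hsliceval x hx]
    refine setIntegral_congr_fun measurableSet_Ioi (fun t ht => ?_)
    have h1c : (0:ℝ) ≤ 1 - Real.cos t := by nlinarith [Real.cos_le_one t]
    have h2 : (0:ℝ) ≤ x ^ (2*H) := Real.rpow_nonneg hx.le _
    have h3 := Real.exp_pos (-(x * t))
    have hnn : 0 ≤ G x t := mul_nonneg h1c (mul_nonneg h2 h3.le)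
    rw [Real.norm_eq_abs, abs_of_nonneg hnn]
  have hprod : Integrable (Function.uncurry G) (μ.prod μ) := by
    rw [integrable_prod_iff hmeas]
    constructor
    · filter_upwards [ae_restrict_mem measurableSet_Ioi] with x hx
      exact hslice x hx
    · refine (int_J h0 h1).1.congr ?_
      filter_upwards [ae_restrict_mem measurableSet_Ioi] with x hx
      simp only [Function.uncurry_apply_pair]
      rw [hnormval x hx]
  have hswap := MeasureTheory.integral_integral_swap hprod
  have hinner : ∀ t : ℝ, 0 < t →
      ∫ x, G x t ∂μ = Real.Gamma (2*H+1) * ((1 - Real.cos t) * t ^ (-2*H-1)) := by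
    intro t ht
    have heq : ∀ x : ℝ, G x t = (1 - Real.cos t) * (x ^ (2*H+1-1) * Real.exp (-(t * x))) := by
      intro x
      show (1 - Real.cos t) * (x ^ (2*H) * Real.exp (-(x * t))) = _
      rw [mul_comm x t]; norm_num
    simp_rw [heq]
    rw [hμ, MeasureTheory.integral_const_mul,
      integral_rpow_mul_exp_neg_mul_Ioi (by linarith : (0:ℝ) < 2*H+1) ht,
      one_div, Real.inv_rpow ht.le, ← Real.rpow_neg ht.le,
      show -(2*H+1) = -2*H-1 by ring]
    ring
  have hLHS : ∫ x, (∫ t, G x t ∂μ) ∂μ = π / (2 * Real.sin (π * H)) := by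
    rw [← (int_J h0 h1).2, hμ]
    exact setIntegral_congr_fun measurableSet_Ioi (fun x hx => hsliceval x hx)
  have hRHS : ∫ t, (∫ x, G x t ∂μ) ∂μ
      = Real.Gamma (2*H+1) * ∫ t in Ioi (0:ℝ), (1 - Real.cos t) * t ^ (-2*H-1) := by
    rw [hμ, ← MeasureTheory.integral_const_mul]
    exact setIntegral_congr_fun measurableSet_Ioi (fun t ht => hinner t ht)
  have hkey : Real.Gamma (2*H+1) * (∫ t in Ioi (0:ℝ), (1 - Real.cos t) * t ^ (-2*H-1))
      = π / (2 * Real.sin (π * H)) := by rw [← hRHS, ← hswap, hLHS]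
  constructor
  · have hint : Integrable (fun t => (Real.Gamma (2*H+1))⁻¹ * ∫ x, G x t ∂μ) μ :=
      hprod.integral_prod_right.const_mul _
    refine hint.congr ?_
    filter_upwards [ae_restrict_mem measurableSet_Ioi] with t ht
    show (Real.Gamma (2*H+1))⁻¹ * (∫ x, G x t ∂μ) = (1 - Real.cos t) * t ^ (-2*H-1)
    rw [hinner t ht, ← mul_assoc, inv_mul_cancel₀ hΓpos.ne', one_mul]
  · have hΓ : Real.Gamma (2*H+1) = 2*H * Real.Gamma (2*H) := by
      rw [Real.Gamma_add_one (by positivity)]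
    have hsin : 0 < Real.sin (π * H) := by
      apply Real.sin_pos_of_pos_of_lt_pi
      · positivity
      · nlinarith [Real.pi_pos]
    have hΓ2 : 0 < Real.Gamma (2*H) := Real.Gamma_pos_of_pos (by linarith)
    rw [hΓ] at hkey
    rw [show H * π = π * H by ring]
    rw [eq_div_iff (by positivity)]
    have h2s : (0:ℝ) < 2 * Real.sin (π * H) := by linarith
    have hkey2 : 2*H*Real.Gamma (2*H) * (∫ t in Ioi (0:ℝ), (1 - Real.cos t) * t ^ (-2*H-1))
        * (2 * Real.sin (π*H)) = π := by
      rw [hkey, div_mul_cancel₀ _ h2s.ne']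
    linear_combination hkey2
end

section
/- Let K be a convex body in ℝ^d and z ∈ ℝ^d. Then ∫_{ℝ^d} |1_{z ∈ x+rK} - 1_{0 ∈ x+rK}| dx = Vol_d((z + rK) Δ rK) ≤ min(2 r^d Vol_d(K), r^{d-1} Vol_{d-1}(proj_{z^⊥} K) · 2‖z‖), for every r > 0; in particular the function (x,r) ↦ 1_{z∈x+rK} - 1_{0∈x+rK} is integrable with respect to ν_H(dx,dr) = dx r^{-d-1+2H} dr whenever 0 < H < 1/2. -/
open scoped Pointwise NNReal ENNReal
open MeasureTheory Set

lemma aux1 {T : Set ℝ} (hT : Convex ℝ T) (hb : Bornology.IsBounded T) (c : ℝ) :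
    volume ((c +ᵥ T) \ T) ≤ ENNReal.ofReal |c| := by
  rcases T.eq_empty_or_nonempty with rfl | hne
  · simp
  have hba : BddAbove T := hb.bddAbove
  have hbb : BddBelow T := hb.bddBelow
  set M := sSup T with hM
  set m' := sInf T with hm'
  have hsub : (c +ᵥ T) \ T ⊆ Icc (m' + c) m' ∪ Icc M (M + c) := by
    rintro x ⟨hx1, hx2⟩
    rw [Set.mem_vadd_set_iff_neg_vadd_mem] at hx1
    have ht : -c + x ∈ T := hx1
    have h1 : m' + c ≤ x := by
      have := csInf_le hbb ht; linarith
    have h2 : x ≤ M + c := by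
      have := le_csSup hba ht; linarith
    have hnotIoo : x ∉ Ioo m' M := by
      intro hx
      apply hx2
      obtain ⟨t1, ht1, ht1'⟩ := (csInf_lt_iff hbb hne).1 hx.1
      obtain ⟨t2, ht2, ht2'⟩ := (lt_csSup_iff hba hne).1 hx.2
      exact hT.ordConnected.out ht1 ht2 ⟨ht1'.le, ht2'.le⟩
    rcases le_or_gt x m' with h | h
    · exact Or.inl ⟨h1, h⟩
    · have : M ≤ x := by
        by_contra hMx
        exact hnotIoo ⟨h, lt_of_not_ge hMx⟩
      exact Or.inr ⟨this, h2⟩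
  calc volume ((c +ᵥ T) \ T) ≤ volume (Icc (m' + c) m' ∪ Icc M (M + c)) := measure_mono hsub
    _ ≤ volume (Icc (m' + c) m') + volume (Icc M (M + c)) := measure_union_le _ _
    _ = ENNReal.ofReal (-c) + ENNReal.ofReal c := by
        rw [Real.volume_Icc, Real.volume_Icc]
        congr 1 <;> congr 1 <;> ring
    _ ≤ ENNReal.ofReal |c| := by
        rcases le_total 0 c with h | h
        · rw [ENNReal.ofReal_eq_zero.2 (by linarith), abs_of_nonneg h, zero_add]
        · rw [(ENNReal.ofReal_eq_zero.2 h : ENNReal.ofReal c = 0), abs_of_nonpos h, add_zero]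

lemma aux2 {T : Set ℝ} (hT : Convex ℝ T) (hb : Bornology.IsBounded T) (c : ℝ) :
    volume (symmDiff (c +ᵥ T) T) ≤ ENNReal.ofReal (2 * |c|) := by
  have h2 : T \ (c +ᵥ T) = ((-c) +ᵥ (c +ᵥ T)) \ (c +ᵥ T) := by
    rw [neg_vadd_vadd]
  calc volume (symmDiff (c +ᵥ T) T) ≤ volume ((c +ᵥ T) \ T) + volume (T \ (c +ᵥ T)) := by
        rw [Set.symmDiff_def]; exact measure_union_le _ _
    _ ≤ ENNReal.ofReal |c| + ENNReal.ofReal |(-c)| := by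
        gcongr
        · exact aux1 hT hb c
        · rw [h2]
          exact aux1 (hT.vadd c) (hb.vadd c) (-c)
    _ = ENNReal.ofReal (2 * |c|) := by
        rw [abs_neg, ← ENNReal.ofReal_add (abs_nonneg c) (abs_nonneg c)]
        congr 1; ring

lemma aux3 {m : ℕ} {A : Set (ℝ × (Fin m → ℝ))} (hAconv : Convex ℝ A) (hAcomp : IsCompact A)
    (c : ℝ) :
    volume (symmDiff ((c, (0 : Fin m → ℝ)) +ᵥ A) A)
      ≤ ENNReal.ofReal (2 * |c|) * volume (Prod.snd '' A) := by
  have hAmeas : MeasurableSet A := hAcomp.isClosed.measurableSet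
  have htrans : IsCompact ((c, (0 : Fin m → ℝ)) +ᵥ A) := by
    simpa using hAcomp.vadd (c, (0 : Fin m → ℝ))
  have hmeas : MeasurableSet (symmDiff ((c, (0 : Fin m → ℝ)) +ᵥ A) A) :=
    (htrans.isClosed.measurableSet.symmDiff hAmeas)
  have hW : IsCompact (Prod.snd '' A) := hAcomp.image continuous_snd
  have hWmeas : MeasurableSet (Prod.snd '' A) := hW.isClosed.measurableSet
  rw [Measure.volume_eq_prod, Measure.prod_apply_symm hmeas]
  have hsec : ∀ w : Fin m → ℝ,
      (fun t => (t, w)) ⁻¹' (symmDiff ((c, (0 : Fin m → ℝ)) +ᵥ A) A)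
        = symmDiff (c +ᵥ ((fun t => (t, w)) ⁻¹' A)) ((fun t => (t, w)) ⁻¹' A) := by
    intro w
    rw [Set.preimage_symmDiff]
    congr 1
    ext t
    simp only [Set.mem_preimage, Set.mem_vadd_set_iff_neg_vadd_mem]
    constructor
    · intro h; convert h using 2 <;> simp [Prod.ext_iff]
    · intro h; convert h using 2 <;> simp [Prod.ext_iff]
  calc (∫⁻ w, volume ((fun t => (t, w)) ⁻¹' (symmDiff ((c, (0 : Fin m → ℝ)) +ᵥ A) A)))
      ≤ ∫⁻ w, (Prod.snd '' A).indicator (fun _ => ENNReal.ofReal (2 * |c|)) w := by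
        apply lintegral_mono
        intro w
        simp only []
        rw [hsec w]
        by_cases hw : w ∈ Prod.snd '' A
        · rw [Set.indicator_of_mem hw]
          apply aux2
          · intro t1 h1 t2 h2 a b ha hb hab
            have := hAconv h1 h2 ha hb hab
            simpa [Prod.smul_mk, Prod.mk_add_mk, hab, ← add_smul] using this
          · apply Bornology.IsBounded.subset (hAcomp.image continuous_fst).isBounded
            intro t ht
            exact ⟨(t, w), ht, rfl⟩
        · rw [Set.indicator_of_notMem hw]
          have hempty : (fun t => (t, w)) ⁻¹' A = ∅ := by
            ext t
            simp only [Set.mem_preimage, Set.mem_empty_iff_false, iff_false]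
            intro ht
            exact hw ⟨(t, w), ht, rfl⟩
          rw [hempty]
          simp
    _ = ENNReal.ofReal (2 * |c|) * volume (Prod.snd '' A) := by
        rw [lintegral_indicator hWmeas]
        simp [Measure.restrict_apply MeasurableSet.univ]

lemma key {m : ℕ} (K : Set (EuclideanSpace ℝ (Fin (m + 1)))) (hKconv : Convex ℝ K)
    (hKcomp : IsCompact K) (z : EuclideanSpace ℝ (Fin (m + 1))) (hz : z ≠ 0) :
    μH[(m : ℝ)] ((fun x => x - ((inner ℝ x z : ℝ) / ‖z‖ ^ 2) • z) '' K) < ⊤ ∧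
    ∀ r : ℝ, 0 < r → volume (symmDiff (z +ᵥ r • K) (r • K)) ≤
      ENNReal.ofReal (2 * ‖z‖) *
        (ENNReal.ofReal (r ^ m) *
          μH[(m : ℝ)] ((fun x => x - ((inner ℝ x z : ℝ) / ‖z‖ ^ 2) • z) '' K)) := by
  classical
  have hznorm : ‖z‖ ≠ 0 := norm_ne_zero_iff.2 hz
  set u : EuclideanSpace ℝ (Fin (m + 1)) := ‖z‖⁻¹ • z with hu_def
  have hu : ‖u‖ = 1 := by
    rw [hu_def, norm_smul, norm_inv, norm_norm, inv_mul_cancel₀ hznorm]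
  -- orthonormal basis with b 0 = u
  have card : Module.finrank ℝ (EuclideanSpace ℝ (Fin (m + 1))) = Fintype.card (Fin (m + 1)) := by
    simp [finrank_euclideanSpace]
  have horth : Orthonormal ℝ (({0} : Set (Fin (m + 1))).restrict (fun _ => u)) := by
    constructor
    · intro i; exact hu
    · intro i j hij
      exfalso
      apply hij
      ext
      rw [(i.2 : (i : Fin (m+1)) ∈ ({0} : Set (Fin (m+1))))]
      rw [(j.2 : (j : Fin (m+1)) ∈ ({0} : Set (Fin (m+1))))]
  obtain ⟨b, hb⟩ := horth.exists_orthonormalBasis_extension_of_card_eq card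
  have hb0 : b 0 = u := hb 0 rfl
  -- the maps
  set h : EuclideanSpace ℝ (Fin (m + 1)) → (Fin m → ℝ) := fun x j => b.repr x (j.succ) with hh_def
  set Φ : EuclideanSpace ℝ (Fin (m + 1)) → ℝ × (Fin m → ℝ) := fun x => (b.repr x 0, h x) with hΦ_def
  have hΦeq : Φ = (MeasurableEquiv.piFinSuccAbove (fun _ : Fin (m + 1) => ℝ) 0) ∘
      (MeasurableEquiv.toLp 2 (Fin (m + 1) → ℝ)).symm ∘ b.repr := by
    funext x
    show _ = (MeasurableEquiv.piFinSuccAbove (fun _ : Fin (m + 1) => ℝ) 0)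
      ((MeasurableEquiv.toLp 2 (Fin (m + 1) → ℝ)).symm (b.repr x))
    have : (MeasurableEquiv.toLp 2 (Fin (m + 1) → ℝ)).symm (b.repr x) = fun i => b.repr x i := rfl
    rw [this]
    ext j
    · rfl
    · rfl
  have hΦmp : MeasurePreserving Φ volume volume := by
    rw [hΦeq]
    exact ((volume_preserving_piFinSuccAbove (fun _ : Fin (m + 1) => ℝ) 0).comp
      (EuclideanSpace.volume_preserving_symm_measurableEquiv_toLp (Fin (m + 1)))).comp
      b.measurePreserving_repr
  have hΦinj : Function.Injective Φ := by
    rw [hΦeq]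
    exact (MeasurableEquiv.piFinSuccAbove (fun _ : Fin (m + 1) => ℝ) 0).injective.comp
      ((MeasurableEquiv.toLp 2 (Fin (m + 1) → ℝ)).symm.injective.comp b.repr.injective)
  have hrepr : ∀ (x : EuclideanSpace ℝ (Fin (m + 1))) i, b.repr x i = (inner ℝ (b i) x : ℝ) :=
    fun x i => b.repr_apply_apply x i
  have hrepr_add : ∀ (x y : EuclideanSpace ℝ (Fin (m + 1))) i,
      b.repr (x + y) i = b.repr x i + b.repr y i := by
    intro x y i; rw [map_add]; rfl
  have hrepr_sub : ∀ (x y : EuclideanSpace ℝ (Fin (m + 1))) i,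
      b.repr (x - y) i = b.repr x i - b.repr y i := by
    intro x y i; rw [map_sub]; rfl
  have hrepr_smul : ∀ (c : ℝ) (x : EuclideanSpace ℝ (Fin (m + 1))) i,
      b.repr (c • x) i = c * b.repr x i := by
    intro c x i; rw [_root_.map_smul]; rfl
  have hreprz : ∀ j : Fin m, b.repr z (j.succ) = 0 := by
    intro j
    rw [hrepr]
    have : z = ‖z‖ • b 0 := by
      rw [hb0, hu_def, smul_smul, mul_inv_cancel₀ hznorm, one_smul]
    rw [this, real_inner_smul_right]
    rw [b.orthonormal.2 (Fin.succ_ne_zero j)]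
    ring
  have hΦz : Φ z = (‖z‖, (0 : Fin m → ℝ)) := by
    rw [hΦ_def]
    ext
    · show b.repr z 0 = ‖z‖
      rw [hrepr, hb0, hu_def, real_inner_smul_left, real_inner_self_eq_norm_sq, sq,
        inv_mul_cancel_left₀ hznorm]
    · show h _ _ = _
      rw [hh_def]
      simp only [hreprz]
      rfl
  -- linearity
  have hhadd : ∀ x y, h (x + y) = h x + h y := by
    intro x y; funext j; rw [hh_def]; exact hrepr_add x y j.succ
  have hhsmul : ∀ (c : ℝ) x, h (c • x) = c • h x := by
    intro c x; funext j; rw [hh_def]; exact hrepr_smul c x j.succ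
  have hhlin : IsLinearMap ℝ h := ⟨hhadd, hhsmul⟩
  have hΦlin : IsLinearMap ℝ Φ := by
    constructor
    · intro x y
      rw [hΦ_def]
      ext
      · exact hrepr_add x y 0
      · show h (x + y) _ = (h x + h y) _
        rw [hhadd]
    · intro c x
      rw [hΦ_def]
      ext
      · exact hrepr_smul c x 0
      · show h (c • x) _ = (c • h x) _
        rw [hhsmul]
  -- Lipschitz bounds
  have hcoord : ∀ (x : EuclideanSpace ℝ (Fin (m + 1))) i, |b.repr x i| ≤ ‖x‖ := by
    intro x i
    rw [hrepr]
    calc |(inner ℝ (b i) x : ℝ)| ≤ ‖b i‖ * ‖x‖ := abs_real_inner_le_norm _ _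
      _ = ‖x‖ := by rw [b.orthonormal.1 i, one_mul]
  have hhLip : LipschitzWith 1 h := by
    apply LipschitzWith.of_dist_le_mul
    intro x y
    rw [NNReal.coe_one, one_mul]
    rcases isEmpty_or_nonempty (Fin m) with hm | hm
    · rw [Subsingleton.elim (h x) (h y), dist_self, dist_eq_norm]
      exact norm_nonneg _
    apply (dist_pi_le_iff (by rw [dist_eq_norm]; exact norm_nonneg _)).2
    intro j
    rw [Real.dist_eq, hh_def]
    simp only []
    rw [← hrepr_sub, dist_eq_norm]
    exact hcoord _ _
  set g : (Fin m → ℝ) → EuclideanSpace ℝ (Fin (m + 1)) := fun w => ∑ j, w j • b j.succ with hg_def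
  have hglin : IsLinearMap ℝ g := by
    constructor
    · intro w w'
      rw [hg_def]
      simp only [Pi.add_apply, add_smul, Finset.sum_add_distrib]
    · intro c w
      rw [hg_def]
      simp only [Pi.smul_apply, smul_eq_mul, mul_smul, Finset.smul_sum]
  have hgsub : ∀ w w', g w - g w' = g (w - w') := by
    intro w w'
    rw [hg_def]
    simp only [Pi.sub_apply, sub_smul]
    rw [Finset.sum_sub_distrib]
  have hgLip : LipschitzWith m g := by
    apply LipschitzWith.of_dist_le_mul
    intro w w'
    rw [dist_eq_norm, dist_eq_norm, hgsub]
    push_cast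
    calc ‖g (w - w')‖ ≤ ∑ j, ‖(w - w') j • b j.succ‖ := norm_sum_le _ _
      _ = ∑ j, |(w - w') j| := by
          apply Finset.sum_congr rfl
          intro j _
          rw [norm_smul, b.orthonormal.1, mul_one, Real.norm_eq_abs]
      _ ≤ ∑ _j : Fin m, ‖w - w'‖ := by
          apply Finset.sum_le_sum
          intro j _
          exact norm_le_pi_norm (w - w') j
      _ = m * ‖w - w'‖ := by
          rw [Finset.sum_const, Finset.card_univ, Fintype.card_fin, nsmul_eq_mul]
  -- the projection
  set P : EuclideanSpace ℝ (Fin (m + 1)) → EuclideanSpace ℝ (Fin (m + 1)) :=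
    fun x => x - ((inner ℝ x z : ℝ) / ‖z‖ ^ 2) • z with hP_def
  have hPg : ∀ x, P x = g (h x) := by
    intro x
    have hsum := b.sum_repr x
    rw [Fin.sum_univ_succ] at hsum
    have h0 : b.repr x 0 • b 0 = ((inner ℝ x z : ℝ) / ‖z‖ ^ 2) • z := by
      rw [hrepr, hb0, hu_def, real_inner_smul_left, smul_smul, real_inner_comm]
      congr 1
      set t : ℝ := inner ℝ x z with ht
      rw [sq]
      field_simp
    rw [hP_def]
    simp only []
    rw [← h0, sub_eq_iff_eq_add]
    calc x = b.repr x 0 • b 0 + ∑ i : Fin m, b.repr x i.succ • b i.succ := hsum.symm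
      _ = g (h x) + b.repr x 0 • b 0 := add_comm _ _
  have hhP : ∀ x, h (P x) = h x := by
    intro x
    rw [hP_def, hh_def]
    funext j
    simp only []
    rw [hrepr_sub, hrepr_smul, hreprz]
    ring
  have hcoordLip : ∀ i : Fin (m + 1), LipschitzWith 1 (fun x : EuclideanSpace ℝ (Fin (m+1)) => b.repr x i) := by
    intro i
    apply LipschitzWith.of_dist_le_mul
    intro x y
    rw [NNReal.coe_one, one_mul, Real.dist_eq, ← hrepr_sub, dist_eq_norm]
    exact hcoord _ _
  have hΦcont : Continuous Φ := by
    rw [hΦ_def]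
    exact Continuous.prodMk (hcoordLip 0).continuous hhLip.continuous
  -- image facts
  have hhPK : h '' (P '' K) = h '' K := by
    rw [Set.image_image]
    exact Set.image_congr fun x _ => hhP x
  have hPKg : P '' K = g '' (h '' K) := by
    rw [Set.image_image]
    exact (Set.image_congr fun x _ => (hPg x).symm).symm
  have hW1compact : IsCompact (h '' K) := hKcomp.image hhLip.continuous
  have e1 : (μH[(m : ℝ)] : Measure (Fin m → ℝ)) = volume := by
    have := MeasureTheory.hausdorffMeasure_pi_real (ι := Fin m)
    rwa [Fintype.card_fin] at this
  have hle1 : volume (h '' K) ≤ μH[(m : ℝ)] (P '' K) := by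
    rw [← e1, ← hhPK]
    have := hhLip.hausdorffMeasure_image_le (d := (m : ℝ)) (by positivity) (P '' K)
    simpa using this
  have hfin : μH[(m : ℝ)] (P '' K) < ⊤ := by
    rw [hPKg]
    calc μH[(m : ℝ)] (g '' (h '' K)) ≤ ((m : ℝ≥0) : ℝ≥0∞) ^ (m : ℝ) * μH[(m : ℝ)] (h '' K) :=
          hgLip.hausdorffMeasure_image_le (by positivity) _
      _ < ⊤ := by
          rw [e1]
          exact ENNReal.mul_lt_top
            (ENNReal.rpow_lt_top_of_nonneg (by positivity) ENNReal.coe_ne_top)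
            hW1compact.measure_lt_top
  refine ⟨hfin, ?_⟩
  intro r hr
  have hScomp : IsCompact (r • K) := by
    rw [← Set.image_smul]
    exact hKcomp.image (continuous_const_smul r)
  have hSconv : Convex ℝ (r • K) := hKconv.smul r
  have hAconv : Convex ℝ (Φ '' (r • K)) := hSconv.is_linear_image hΦlin
  have hAcomp : IsCompact (Φ '' (r • K)) := hScomp.image hΦcont
  have htransA : Φ '' (z +ᵥ r • K) = (‖z‖, (0 : Fin m → ℝ)) +ᵥ (Φ '' (r • K)) := by
    calc Φ '' (z +ᵥ r • K) = (fun x => Φ z + Φ x) '' (r • K) := by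
          rw [← Set.image_vadd, Set.image_image]
          exact Set.image_congr fun x _ => by rw [vadd_eq_add, hΦlin.map_add]
      _ = (fun p => Φ z + p) '' (Φ '' (r • K)) := (Set.image_image _ _ _).symm
      _ = (‖z‖, (0 : Fin m → ℝ)) +ᵥ (Φ '' (r • K)) := by
          rw [hΦz]
          rfl
  have hpre1 : Φ ⁻¹' ((‖z‖, (0 : Fin m → ℝ)) +ᵥ (Φ '' (r • K))) = z +ᵥ r • K := by
    rw [← htransA, Set.preimage_image_eq _ hΦinj]
  have hpre2 : Φ ⁻¹' (Φ '' (r • K)) = r • K := Set.preimage_image_eq _ hΦinj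
  have hsymm_eq : symmDiff (z +ᵥ r • K) (r • K)
      = Φ ⁻¹' (symmDiff ((‖z‖, (0 : Fin m → ℝ)) +ᵥ (Φ '' (r • K))) (Φ '' (r • K))) := by
    rw [Set.preimage_symmDiff, hpre1, hpre2]
  have hmeasA : MeasurableSet
      (symmDiff ((‖z‖, (0 : Fin m → ℝ)) +ᵥ (Φ '' (r • K))) (Φ '' (r • K))) := by
    have h1 : IsCompact ((‖z‖, (0 : Fin m → ℝ)) +ᵥ (Φ '' (r • K))) :=
      hAcomp.vadd (‖z‖, (0 : Fin m → ℝ))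
    exact h1.isClosed.measurableSet.symmDiff hAcomp.isClosed.measurableSet
  have hvol_eq : volume (symmDiff (z +ᵥ r • K) (r • K))
      = volume (symmDiff ((‖z‖, (0 : Fin m → ℝ)) +ᵥ (Φ '' (r • K))) (Φ '' (r • K))) := by
    rw [hsymm_eq]
    exact hΦmp.measure_preimage hmeasA.nullMeasurableSet
  have hsndA : Prod.snd '' (Φ '' (r • K)) = r • (h '' K) := by
    rw [Set.image_image]
    have e2 : (fun x => (Φ x).2) '' (r • K) = h '' (r • K) := rfl
    rw [e2, ← Set.image_smul, Set.image_image]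
    have e3 : (fun x => h (r • x)) '' K = (fun x => r • h x) '' K :=
      Set.image_congr fun x _ => hhsmul r x
    rw [e3, ← Set.image_image (fun w => r • w) h, Set.image_smul]
  have hvolsnd : volume (Prod.snd '' (Φ '' (r • K))) = ENNReal.ofReal (r ^ m) * volume (h '' K) := by
    rw [hsndA, Measure.addHaar_smul_of_nonneg volume hr.le, Module.finrank_fin_fun]
  calc volume (symmDiff (z +ᵥ r • K) (r • K))
      = volume (symmDiff ((‖z‖, (0 : Fin m → ℝ)) +ᵥ (Φ '' (r • K))) (Φ '' (r • K))) := hvol_eq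
    _ ≤ ENNReal.ofReal (2 * |‖z‖|) * volume (Prod.snd '' (Φ '' (r • K))) := aux3 hAconv hAcomp ‖z‖
    _ = ENNReal.ofReal (2 * ‖z‖) * (ENNReal.ofReal (r ^ m) * volume (h '' K)) := by
        rw [abs_norm, hvolsnd]
    _ ≤ ENNReal.ofReal (2 * ‖z‖) * (ENNReal.ofReal (r ^ m) * μH[(m : ℝ)] (P '' K)) := by
        gcongr

variable {d : ℕ}

lemma aux_mem (S : Set (EuclideanSpace ℝ (Fin d))) (x v : EuclideanSpace ℝ (Fin d)) :
    v ∈ x +ᵥ S ↔ v - x ∈ S := by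
  rw [Set.mem_vadd_set_iff_neg_vadd_mem]
  constructor
  · intro h; rwa [vadd_eq_add, neg_add_eq_sub] at h
  · intro h; rwa [vadd_eq_add, neg_add_eq_sub]

lemma aux_ind (S : Set (EuclideanSpace ℝ (Fin d))) (z x : EuclideanSpace ℝ (Fin d)) :
    |Set.indicator (x +ᵥ S) (fun _ => (1 : ℝ)) z - Set.indicator (x +ᵥ S) (fun _ => (1 : ℝ)) 0|
      = Set.indicator (symmDiff {y | z - y ∈ S} {y | (0 : EuclideanSpace ℝ (Fin d)) - y ∈ S})
          (fun _ => (1 : ℝ)) x := by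
  have h1 : z ∈ x +ᵥ S ↔ x ∈ {y | z - y ∈ S} := by rw [aux_mem]; rfl
  have h2 : (0 : EuclideanSpace ℝ (Fin d)) ∈ x +ᵥ S
      ↔ x ∈ {y | (0 : EuclideanSpace ℝ (Fin d)) - y ∈ S} := by rw [aux_mem]; rfl
  by_cases hz : x ∈ {y | z - y ∈ S} <;>
    by_cases h0 : x ∈ {y | (0 : EuclideanSpace ℝ (Fin d)) - y ∈ S}
  · rw [Set.indicator_of_mem (h1.2 hz), Set.indicator_of_mem (h2.2 h0),
      Set.indicator_of_notMem (by simp only [Set.mem_symmDiff, Set.mem_setOf_eq] at hz h0 ⊢; tauto)]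
    norm_num
  · rw [Set.indicator_of_mem (h1.2 hz), Set.indicator_of_notMem (fun hc => h0 (h2.1 hc)),
      Set.indicator_of_mem (by simp only [Set.mem_symmDiff, Set.mem_setOf_eq] at hz h0 ⊢; tauto)]
    norm_num
  · rw [Set.indicator_of_notMem (fun hc => hz (h1.1 hc)), Set.indicator_of_mem (h2.2 h0),
      Set.indicator_of_mem (by simp only [Set.mem_symmDiff, Set.mem_setOf_eq] at hz h0 ⊢; tauto)]
    norm_num
  · rw [Set.indicator_of_notMem (fun hc => hz (h1.1 hc)),
      Set.indicator_of_notMem (fun hc => h0 (h2.1 hc)),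
      Set.indicator_of_notMem (by simp only [Set.mem_symmDiff, Set.mem_setOf_eq] at hz h0 ⊢; tauto)]
    norm_num

lemma aux_vol (S : Set (EuclideanSpace ℝ (Fin d))) (z : EuclideanSpace ℝ (Fin d)) :
    volume (symmDiff {y | z - y ∈ S} {y | (0 : EuclideanSpace ℝ (Fin d)) - y ∈ S})
      = volume (symmDiff (z +ᵥ S) S) := by
  have hneg : ∀ v : EuclideanSpace ℝ (Fin d),
      {y | v - y ∈ S} = (fun x => -x) ⁻¹' ((-v) +ᵥ S) := by
    intro v
    ext y
    rw [Set.mem_preimage, Set.mem_vadd_set_iff_neg_vadd_mem]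
    simp [sub_eq_add_neg, add_comm]
  rw [hneg z, hneg 0, ← Set.preimage_symmDiff]
  rw [neg_zero, zero_vadd]
  rw [Measure.measure_preimage_neg]
  have hvadd : z +ᵥ (symmDiff ((-z) +ᵥ S) S) = symmDiff S (z +ᵥ S) := by
    have : z +ᵥ (symmDiff ((-z) +ᵥ S) S) = (fun x => z +ᵥ x) '' (symmDiff ((-z) +ᵥ S) S) := rfl
    have hinj : Function.Injective (fun x : EuclideanSpace ℝ (Fin d) => z +ᵥ x) := by
      intro a b hab
      simpa using hab
    rw [this, Set.image_symmDiff hinj]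
    have e1 : (fun x => z +ᵥ x) '' ((-z) +ᵥ S) = S := by
      rw [Set.image_vadd, vadd_vadd, add_neg_cancel, zero_vadd]
    have e2 : (fun x => z +ᵥ x) '' S = z +ᵥ S := Set.image_vadd
    rw [e1, e2]
  calc volume (symmDiff ((-z) +ᵥ S) S) = volume (z +ᵥ symmDiff ((-z) +ᵥ S) S) :=
        (measure_vadd _ _ _).symm
    _ = volume (symmDiff S (z +ᵥ S)) := by rw [hvadd]
    _ = volume (symmDiff (z +ᵥ S) S) := by rw [symmDiff_comm]

lemma aux_meas {S : Set (EuclideanSpace ℝ (Fin d))} (hS : MeasurableSet S)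
    (v : EuclideanSpace ℝ (Fin d)) : MeasurableSet {y | v - y ∈ S} := by
  have : {y | v - y ∈ S} = (fun y : EuclideanSpace ℝ (Fin d) => v - y) ⁻¹' S := rfl
  rw [this]
  exact hS.preimage (continuous_const.sub continuous_id).measurable

lemma aux_int {S : Set (EuclideanSpace ℝ (Fin d))} (hS : MeasurableSet S)
    (z : EuclideanSpace ℝ (Fin d)) :
    (∫ x : EuclideanSpace ℝ (Fin d),
        |Set.indicator (x +ᵥ S) (fun _ => (1 : ℝ)) z - Set.indicator (x +ᵥ S) (fun _ => (1 : ℝ)) 0|)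
      = (volume (symmDiff (z +ᵥ S) S)).toReal := by
  have h1 : (∫ x : EuclideanSpace ℝ (Fin d),
      |Set.indicator (x +ᵥ S) (fun _ => (1 : ℝ)) z - Set.indicator (x +ᵥ S) (fun _ => (1 : ℝ)) 0|)
      = ∫ x, Set.indicator (symmDiff {y | z - y ∈ S} {y | (0 : EuclideanSpace ℝ (Fin d)) - y ∈ S})
          (fun _ => (1 : ℝ)) x := by
    apply integral_congr_ae
    exact Filter.Eventually.of_forall fun x => aux_ind S z x
  rw [h1, integral_indicator_const (1 : ℝ) ((aux_meas hS z).symmDiff (aux_meas hS 0)),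
    smul_eq_mul, mul_one, measureReal_def, aux_vol]

lemma aux_lint {S : Set (EuclideanSpace ℝ (Fin d))} (hS : MeasurableSet S)
    (z : EuclideanSpace ℝ (Fin d)) :
    (∫⁻ x : EuclideanSpace ℝ (Fin d),
        ‖Set.indicator (x +ᵥ S) (fun _ => (1 : ℝ)) z - Set.indicator (x +ᵥ S) (fun _ => (1 : ℝ)) 0‖₊)
      = volume (symmDiff (z +ᵥ S) S) := by
  have h1 : ∀ x : EuclideanSpace ℝ (Fin d),
      (‖Set.indicator (x +ᵥ S) (fun _ => (1 : ℝ)) z - Set.indicator (x +ᵥ S) (fun _ => (1 : ℝ)) 0‖₊ : ℝ≥0∞)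
      = Set.indicator (symmDiff {y | z - y ∈ S} {y | (0 : EuclideanSpace ℝ (Fin d)) - y ∈ S})
          (fun _ => (1 : ℝ≥0∞)) x := by
    intro x
    have := aux_ind S z x
    by_cases hx : x ∈ symmDiff {y | z - y ∈ S} {y | (0 : EuclideanSpace ℝ (Fin d)) - y ∈ S}
    · rw [Set.indicator_of_mem hx] at this ⊢
      rw [show |Set.indicator (x +ᵥ S) (fun _ => (1:ℝ)) z - Set.indicator (x +ᵥ S) (fun _ => (1:ℝ)) 0| = ‖Set.indicator (x +ᵥ S) (fun _ => (1:ℝ)) z - Set.indicator (x +ᵥ S) (fun _ => (1:ℝ)) 0‖ from rfl] at this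
      rw [← ENNReal.ofReal_coe_nnreal, coe_nnnorm, this]
      simp
    · rw [Set.indicator_of_notMem hx] at this ⊢
      rw [show |Set.indicator (x +ᵥ S) (fun _ => (1:ℝ)) z - Set.indicator (x +ᵥ S) (fun _ => (1:ℝ)) 0| = ‖Set.indicator (x +ᵥ S) (fun _ => (1:ℝ)) z - Set.indicator (x +ᵥ S) (fun _ => (1:ℝ)) 0‖ from rfl] at this
      rw [← ENNReal.ofReal_coe_nnreal, coe_nnnorm, this]
      simp
  rw [lintegral_congr h1, lintegral_indicator ((aux_meas hS z).symmDiff (aux_meas hS 0)),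
    setLIntegral_one, aux_vol S z]

theorem stmt16 {d : ℕ} (hd : 1 ≤ d) (K : Set (EuclideanSpace ℝ (Fin d)))
    (hKconv : Convex ℝ K) (hKcomp : IsCompact K) (hKint : (interior K).Nonempty)
    (z : EuclideanSpace ℝ (Fin d)) (hz : z ≠ 0)
    (H : ℝ) (hH : H ∈ Set.Ioo (0 : ℝ) (1 / 2))
    (ν : Measure (EuclideanSpace ℝ (Fin d) × ℝ))
    (hν : ν = (volume : Measure (EuclideanSpace ℝ (Fin d))).prod
      (((volume : Measure ℝ).restrict (Set.Ioi 0)).withDensity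
        (fun r => ENNReal.ofReal (r ^ (-(d : ℝ) - 1 + 2 * H))))) :
    (∀ r : ℝ, 0 < r →
      (∫ x : EuclideanSpace ℝ (Fin d), |Set.indicator (x +ᵥ r • K : Set (EuclideanSpace ℝ (Fin d))) (fun _ => (1 : ℝ)) z
          - Set.indicator (x +ᵥ r • K) (fun _ => (1 : ℝ)) 0|)
        = (volume (symmDiff (z +ᵥ r • K) (r • K))).toReal ∧
      (volume (symmDiff (z +ᵥ r • K) (r • K))).toReal
        ≤ min (2 * r ^ d * (volume K).toReal)
            (r ^ (d - 1)
              * (μH[(d : ℝ) - 1]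
                  ((fun x => x - ((inner ℝ x z : ℝ) / ‖z‖ ^ 2) • z) '' K)).toReal
              * (2 * ‖z‖))) ∧
    Integrable (fun p : EuclideanSpace ℝ (Fin d) × ℝ =>
      Set.indicator (p.1 +ᵥ p.2 • K) (fun _ => (1 : ℝ)) z
        - Set.indicator (p.1 +ᵥ p.2 • K) (fun _ => (1 : ℝ)) 0) ν := by
  obtain ⟨m, rfl⟩ : ∃ m, d = m + 1 := ⟨d - 1, (Nat.succ_pred_eq_of_pos hd).symm⟩
  obtain ⟨hfin, hbound⟩ := key K hKconv hKcomp z hz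
  obtain ⟨hH0, hH2⟩ := hH
  have hzpos : 0 < ‖z‖ := norm_pos_iff.2 hz
  have hexp : ((m + 1 : ℕ) : ℝ) - 1 = (m : ℝ) := by push_cast; ring
  rw [hexp]
  have hKvol : volume K ≠ ⊤ := hKcomp.measure_lt_top.ne
  set C := μH[(m : ℝ)] ((fun x => x - ((inner ℝ x z : ℝ) / ‖z‖ ^ 2) • z) '' K) with hC
  -- measurability of scaled bodies and basic volume facts
  have hSmeas : ∀ r : ℝ, MeasurableSet (r • K) := by
    intro r
    have : IsCompact (r • K) := by
      rw [← Set.image_smul]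
      exact hKcomp.image (continuous_const_smul r)
    exact this.isClosed.measurableSet
  have hvol_smul : ∀ r : ℝ, 0 ≤ r →
      volume (r • K) = ENNReal.ofReal (r ^ (m + 1)) * volume K := by
    intro r hr
    rw [Measure.addHaar_smul_of_nonneg volume hr, finrank_euclideanSpace_fin]
  have hV1 : ∀ r : ℝ, 0 ≤ r → volume (symmDiff (z +ᵥ r • K) (r • K))
      ≤ ENNReal.ofReal 2 * (ENNReal.ofReal (r ^ (m + 1)) * volume K) := by
    intro r hr
    calc volume (symmDiff (z +ᵥ r • K) (r • K)) ≤ volume ((z +ᵥ r • K) ∪ r • K) :=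
          measure_mono (Set.symmDiff_subset_union)
      _ ≤ volume (z +ᵥ r • K) + volume (r • K) := measure_union_le _ _
      _ = volume (r • K) + volume (r • K) := by rw [measure_vadd]
      _ = ENNReal.ofReal 2 * (ENNReal.ofReal (r ^ (m + 1)) * volume K) := by
          rw [hvol_smul r hr, ← two_mul]
          congr 1
          rw [ENNReal.ofReal_ofNat]
  constructor
  · intro r hr
    refine ⟨aux_int (hSmeas r) z, ?_⟩
    apply le_min
    · have h1 := hV1 r hr.le
      have hne : ENNReal.ofReal 2 * (ENNReal.ofReal (r ^ (m + 1)) * volume K) ≠ ⊤ := by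
        exact ENNReal.mul_ne_top ENNReal.ofReal_ne_top
          (ENNReal.mul_ne_top ENNReal.ofReal_ne_top hKvol)
      calc (volume (symmDiff (z +ᵥ r • K) (r • K))).toReal
          ≤ (ENNReal.ofReal 2 * (ENNReal.ofReal (r ^ (m + 1)) * volume K)).toReal :=
            ENNReal.toReal_mono hne h1
        _ = 2 * r ^ (m + 1) * (volume K).toReal := by
            rw [ENNReal.toReal_mul, ENNReal.toReal_mul, ENNReal.toReal_ofReal (by norm_num),
              ENNReal.toReal_ofReal (by positivity)]
            ring
    · have h2 := hbound r hr
      have hne : ENNReal.ofReal (2 * ‖z‖) * (ENNReal.ofReal (r ^ m) * C) ≠ ⊤ :=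
        ENNReal.mul_ne_top ENNReal.ofReal_ne_top
          (ENNReal.mul_ne_top ENNReal.ofReal_ne_top hfin.ne)
      calc (volume (symmDiff (z +ᵥ r • K) (r • K))).toReal
          ≤ (ENNReal.ofReal (2 * ‖z‖) * (ENNReal.ofReal (r ^ m) * C)).toReal :=
            ENNReal.toReal_mono hne h2
        _ = (2 * ‖z‖) * (r ^ m * C.toReal) := by
            rw [ENNReal.toReal_mul, ENNReal.toReal_mul, ENNReal.toReal_ofReal (by positivity),
              ENNReal.toReal_ofReal (by positivity)]
        _ = r ^ (m + 1 - 1) * C.toReal * (2 * ‖z‖) := by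
            simp only [Nat.add_sub_cancel]
            ring
  · -- Integrability
    subst hν
    set ρ : ℝ → ℝ≥0∞ := fun r => ENNReal.ofReal (r ^ (-((m + 1 : ℕ) : ℝ) - 1 + 2 * H)) with hρ
    have hρmeas : Measurable ρ := by
      apply Measurable.ennreal_ofReal
      exact measurable_id.pow measurable_const
    set μr := ((volume : Measure ℝ).restrict (Set.Ioi 0)).withDensity ρ with hμr
    set D1 : Set (EuclideanSpace ℝ (Fin (m + 1)) × ℝ) :=
      {p | 0 < p.2 ∧ p.2⁻¹ • (z - p.1) ∈ K} with hD1_def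
    set D0 : Set (EuclideanSpace ℝ (Fin (m + 1)) × ℝ) :=
      {p | 0 < p.2 ∧ p.2⁻¹ • ((0 : EuclideanSpace ℝ (Fin (m + 1))) - p.1) ∈ K} with hD0_def
    have hKmeas : MeasurableSet K := hKcomp.isClosed.measurableSet
    have hD1meas : MeasurableSet D1 := by
      have : D1 = (Prod.snd ⁻¹' Set.Ioi (0 : ℝ)) ∩
          ((fun p : EuclideanSpace ℝ (Fin (m + 1)) × ℝ => p.2⁻¹ • (z - p.1)) ⁻¹' K) := by
        ext p; simp [hD1_def, Set.mem_Ioi, and_comm]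
      rw [this]
      exact (measurable_snd measurableSet_Ioi).inter
        ((measurable_snd.inv.smul (measurable_const.sub measurable_fst)) hKmeas)
    have hD0meas : MeasurableSet D0 := by
      have : D0 = (Prod.snd ⁻¹' Set.Ioi (0 : ℝ)) ∩
          ((fun p : EuclideanSpace ℝ (Fin (m + 1)) × ℝ =>
            p.2⁻¹ • ((0 : EuclideanSpace ℝ (Fin (m + 1))) - p.1)) ⁻¹' K) := by
        ext p; simp [hD0_def, Set.mem_Ioi, and_comm]
      rw [this]
      exact (measurable_snd measurableSet_Ioi).inter
        ((measurable_snd.inv.smul (measurable_const.sub measurable_fst)) hKmeas)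
    set g : EuclideanSpace ℝ (Fin (m + 1)) × ℝ → ℝ :=
      fun p => D1.indicator (fun _ => (1 : ℝ)) p - D0.indicator (fun _ => (1 : ℝ)) p with hg_def
    have hgmeas : Measurable g :=
      (measurable_const.indicator hD1meas).sub (measurable_const.indicator hD0meas)
    have hpt : ∀ (x : EuclideanSpace ℝ (Fin (m + 1))) (r : ℝ), 0 < r →
        Set.indicator (x +ᵥ r • K) (fun _ => (1 : ℝ)) z
          - Set.indicator (x +ᵥ r • K) (fun _ => (1 : ℝ)) 0 = g (x, r) := by
      intro x r hr
      have e1 : z ∈ x +ᵥ r • K ↔ (x, r) ∈ D1 := by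
        rw [aux_mem, Set.mem_smul_set_iff_inv_smul_mem₀ (ne_of_gt hr)]
        simp only [hD1_def, Set.mem_setOf_eq]
        exact ⟨fun h => ⟨hr, h⟩, fun h => h.2⟩
      have e0 : (0 : EuclideanSpace ℝ (Fin (m + 1))) ∈ x +ᵥ r • K ↔ (x, r) ∈ D0 := by
        rw [aux_mem, Set.mem_smul_set_iff_inv_smul_mem₀ (ne_of_gt hr)]
        simp only [hD0_def, Set.mem_setOf_eq]
        exact ⟨fun h => ⟨hr, h⟩, fun h => h.2⟩
      have q1 : Set.indicator (x +ᵥ r • K) (fun _ => (1 : ℝ)) z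
          = D1.indicator (fun _ => (1 : ℝ)) (x, r) := by
        by_cases hmem : z ∈ x +ᵥ r • K
        · rw [Set.indicator_of_mem hmem, Set.indicator_of_mem (e1.1 hmem)]
        · rw [Set.indicator_of_notMem hmem,
            Set.indicator_of_notMem (fun hc => hmem (e1.2 hc))]
      have q0 : Set.indicator (x +ᵥ r • K) (fun _ => (1 : ℝ)) 0
          = D0.indicator (fun _ => (1 : ℝ)) (x, r) := by
        by_cases hmem : (0 : EuclideanSpace ℝ (Fin (m + 1))) ∈ x +ᵥ r • K
        · rw [Set.indicator_of_mem hmem, Set.indicator_of_mem (e0.1 hmem)]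
        · rw [Set.indicator_of_notMem hmem,
            Set.indicator_of_notMem (fun hc => hmem (e0.2 hc))]
      rw [q1, q0]
    have hnull : (volume.prod μr) {p : EuclideanSpace ℝ (Fin (m + 1)) × ℝ | p.2 ≤ 0} = 0 := by
      have hset : {p : EuclideanSpace ℝ (Fin (m + 1)) × ℝ | p.2 ≤ 0}
          = (Set.univ : Set (EuclideanSpace ℝ (Fin (m + 1)))) ×ˢ (Set.Iic 0) := by
        ext p; simp
      rw [hset, Measure.prod_prod]
      have hzero : μr (Set.Iic 0) = 0 := by
        rw [hμr, withDensity_apply _ measurableSet_Iic,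
          Measure.restrict_restrict measurableSet_Iic]
        have : Set.Iic (0 : ℝ) ∩ Set.Ioi 0 = ∅ := by
          ext x
          simp only [Set.mem_inter_iff, Set.mem_Iic, Set.mem_Ioi, Set.mem_empty_iff_false,
            iff_false, not_and]
          intro h h'
          linarith
        rw [this, Measure.restrict_empty, lintegral_zero_measure]
      rw [hzero, mul_zero]
    have hae : (fun p : EuclideanSpace ℝ (Fin (m + 1)) × ℝ =>
        Set.indicator (p.1 +ᵥ p.2 • K) (fun _ => (1 : ℝ)) z
          - Set.indicator (p.1 +ᵥ p.2 • K) (fun _ => (1 : ℝ)) 0) =ᵐ[volume.prod μr] g := by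
      rw [Filter.EventuallyEq, ae_iff]
      apply measure_mono_null _ hnull
      intro p hp
      simp only [Set.mem_setOf_eq] at hp ⊢
      by_contra hle
      push_neg at hle
      exact hp (hpt p.1 p.2 hle)
    refine ⟨hgmeas.aestronglyMeasurable.congr hae.symm, ?_⟩
    rw [hasFiniteIntegral_congr hae, hasFiniteIntegral_def]
    rw [lintegral_prod_symm _ (hgmeas.enorm.aemeasurable)]
    simp only [enorm_eq_nnnorm]
    have hGmeas : Measurable fun r : ℝ => ∫⁻ x, ‖g (x, r)‖₊ ∂volume :=
      Measurable.lintegral_prod_left hgmeas.nnnorm.coe_nnreal_ennreal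
    rw [hμr, lintegral_withDensity_eq_lintegral_mul _ hρmeas hGmeas]
    have hsplit : ∫⁻ r in Set.Ioi (0 : ℝ), (ρ * fun r => ∫⁻ x, ‖g (x, r)‖₊ ∂volume) r
        = (∫⁻ r in Set.Ioc (0 : ℝ) 1, (ρ * fun r => ∫⁻ x, ‖g (x, r)‖₊ ∂volume) r)
          + ∫⁻ r in Set.Ioi (1 : ℝ), (ρ * fun r => ∫⁻ x, ‖g (x, r)‖₊ ∂volume) r := by
      rw [← lintegral_union measurableSet_Ioi Set.Ioc_disjoint_Ioi_same,
        Set.Ioc_union_Ioi_eq_Ioi zero_le_one]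
    rw [hsplit]
    -- identify the inner integral for r > 0
    have hGV : ∀ r : ℝ, 0 < r → (∫⁻ x, ‖g (x, r)‖₊ ∂volume)
        = volume (symmDiff (z +ᵥ r • K) (r • K)) := by
      intro r hr
      rw [← aux_lint (hSmeas r) z]
      apply lintegral_congr
      intro x
      rw [hpt x r hr]
    apply ENNReal.add_lt_top.2
    constructor
    · -- small r
      have hb : ∀ r ∈ Set.Ioc (0 : ℝ) 1,
          (ρ * fun r => ∫⁻ x, ‖g (x, r)‖₊ ∂volume) r
            ≤ (ENNReal.ofReal 2 * volume K) * ENNReal.ofReal (r ^ (2 * H - 1)) := by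
        intro r hr
        rw [Pi.mul_apply, hGV r hr.1]
        calc ρ r * volume (symmDiff (z +ᵥ r • K) (r • K))
            ≤ ρ r * (ENNReal.ofReal 2 * (ENNReal.ofReal (r ^ (m + 1)) * volume K)) := by
              gcongr
              exact hV1 r hr.1.le
          _ = (ENNReal.ofReal 2 * volume K) * (ρ r * ENNReal.ofReal (r ^ (m + 1))) := by ring
          _ = (ENNReal.ofReal 2 * volume K) * ENNReal.ofReal (r ^ (2 * H - 1)) := by
              congr 1
              rw [hρ]
              rw [← ENNReal.ofReal_mul (Real.rpow_nonneg hr.1.le _)]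
              congr 1
              rw [← Real.rpow_natCast r (m + 1), ← Real.rpow_add hr.1]
              congr 1
              push_cast
              ring
      calc (∫⁻ r in Set.Ioc (0 : ℝ) 1, (ρ * fun r => ∫⁻ x, ‖g (x, r)‖₊ ∂volume) r)
          ≤ ∫⁻ r in Set.Ioc (0 : ℝ) 1,
              (ENNReal.ofReal 2 * volume K) * ENNReal.ofReal (r ^ (2 * H - 1)) :=
            setLIntegral_mono
              (measurable_const.mul
                ((measurable_id.pow measurable_const).ennreal_ofReal)) hb
        _ = (ENNReal.ofReal 2 * volume K)
              * ∫⁻ r in Set.Ioc (0 : ℝ) 1, ENNReal.ofReal (r ^ (2 * H - 1)) :=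
            lintegral_const_mul' _ _ (ENNReal.mul_ne_top ENNReal.ofReal_ne_top hKvol)
        _ < ⊤ := by
            apply ENNReal.mul_lt_top
            · exact ENNReal.mul_lt_top ENNReal.ofReal_lt_top hKcomp.measure_lt_top
            · have hint : IntegrableOn (fun r : ℝ => r ^ (2 * H - 1)) (Set.Ioo 0 2) :=
                (intervalIntegral.integrableOn_Ioo_rpow_iff (by norm_num : (0:ℝ) < 2)).2 (by linarith)
              calc (∫⁻ r in Set.Ioc (0 : ℝ) 1, ENNReal.ofReal (r ^ (2 * H - 1)))
                  ≤ ∫⁻ r in Set.Ioo (0 : ℝ) 2, ENNReal.ofReal (r ^ (2 * H - 1)) :=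
                    lintegral_mono_set (fun x hx =>
                      ⟨hx.1, lt_of_le_of_lt hx.2 one_lt_two⟩)
                _ < ⊤ := hint.lintegral_lt_top
    · -- large r
      have hb : ∀ r ∈ Set.Ioi (1 : ℝ),
          (ρ * fun r => ∫⁻ x, ‖g (x, r)‖₊ ∂volume) r
            ≤ (ENNReal.ofReal (2 * ‖z‖) * C) * ENNReal.ofReal (r ^ (2 * H - 2)) := by
        intro r hr
        have hr0 : (0 : ℝ) < r := lt_trans zero_lt_one hr
        rw [Pi.mul_apply, hGV r hr0]
        calc ρ r * volume (symmDiff (z +ᵥ r • K) (r • K))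
            ≤ ρ r * (ENNReal.ofReal (2 * ‖z‖) * (ENNReal.ofReal (r ^ m) * C)) := by
              gcongr
              exact hbound r hr0
          _ = (ENNReal.ofReal (2 * ‖z‖) * C) * (ρ r * ENNReal.ofReal (r ^ m)) := by ring
          _ = (ENNReal.ofReal (2 * ‖z‖) * C) * ENNReal.ofReal (r ^ (2 * H - 2)) := by
              congr 1
              rw [hρ]
              rw [← ENNReal.ofReal_mul (Real.rpow_nonneg hr0.le _)]
              congr 1
              rw [← Real.rpow_natCast r m, ← Real.rpow_add hr0]
              congr 1
              push_cast
              ring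
      calc (∫⁻ r in Set.Ioi (1 : ℝ), (ρ * fun r => ∫⁻ x, ‖g (x, r)‖₊ ∂volume) r)
          ≤ ∫⁻ r in Set.Ioi (1 : ℝ),
              (ENNReal.ofReal (2 * ‖z‖) * C) * ENNReal.ofReal (r ^ (2 * H - 2)) :=
            setLIntegral_mono
              (measurable_const.mul
                ((measurable_id.pow measurable_const).ennreal_ofReal)) hb
        _ = (ENNReal.ofReal (2 * ‖z‖) * C)
              * ∫⁻ r in Set.Ioi (1 : ℝ), ENNReal.ofReal (r ^ (2 * H - 2)) :=
            lintegral_const_mul' _ _ (ENNReal.mul_ne_top ENNReal.ofReal_ne_top hfin.ne)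
        _ < ⊤ := by
            apply ENNReal.mul_lt_top
            · exact ENNReal.mul_lt_top ENNReal.ofReal_lt_top hfin
            · have hint : IntegrableOn (fun r : ℝ => r ^ (2 * H - 2)) (Set.Ioi 1) :=
                integrableOn_Ioi_rpow_of_lt (by linarith) zero_lt_one
              exact hint.lintegral_lt_top
end

section
/- Let K be a convex body in ℝ^d, 0 < H < 1/2, and let ξ be the fractional Poisson field ξ(z) = ∫ (1_{z∈x+rK} - 1_{0∈x+rK}) N_H(dx,dr) driven by a Poisson process N_H with intensity ν_H(dx,dr) = dx r^{-d-1+2H} dr. Then for every z with ‖z‖=1, E[ξ(z)²] = (Vol_d(K)/H) · ‖z‖_{R_{-2H}K}^{2H}, where R_p K is the radial p-th mean body with ‖u‖_{R_pK} = ((1/Vol_d(K)) ∫_K ρ_K(x,u)^p dx)^{-1/p} and ρ_K(x,u) = max{t : x+tu ∈ K}. -/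
open scoped Pointwise
open MeasureTheory Set
open scoped ENNReal

lemma S_eq_Icc {d : ℕ} {K : Set (EuclideanSpace ℝ (Fin d))} (hKconv : Convex ℝ K)
    (hKcomp : IsCompact K) {z x : EuclideanSpace ℝ (Fin d)} (hz : ‖z‖ = 1) (hx : x ∈ K) :
    {t : ℝ | 0 ≤ t ∧ x + t • z ∈ K}
      = Set.Icc 0 (sSup {t : ℝ | 0 ≤ t ∧ x + t • z ∈ K}) := by
  set S := {t : ℝ | 0 ≤ t ∧ x + t • z ∈ K} with hS
  have h0 : (0 : ℝ) ∈ S := ⟨le_refl 0, by simpa using hx⟩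
  obtain ⟨R, hR⟩ := hKcomp.isBounded.subset_closedBall 0
  have hbdd : BddAbove S := by
    refine ⟨R + R, fun t ht => ?_⟩
    have h1 : ‖x + t • z‖ ≤ R := by simpa [Metric.mem_closedBall] using hR ht.2
    have h2 : ‖x‖ ≤ R := by simpa [Metric.mem_closedBall] using hR hx
    have : t = ‖(x + t • z) - x‖ := by
      simp [norm_smul, hz, abs_of_nonneg ht.1]
    calc t = ‖(x + t • z) - x‖ := this
      _ ≤ ‖x + t • z‖ + ‖x‖ := norm_sub_le _ _
      _ ≤ R + R := add_le_add h1 h2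
  have hcl : IsClosed S := by
    have : S = Set.Ici (0:ℝ) ∩ (fun t : ℝ => x + t • z) ⁻¹' K := by
      ext t; simp [hS, Set.mem_Ici, and_comm]
    rw [this]
    exact isClosed_Ici.inter (hKcomp.isClosed.preimage (by continuity))
  have hconvS : Convex ℝ S := by
    intro a ha b hb α β hα hβ hαβ
    refine ⟨add_nonneg (mul_nonneg hα ha.1) (mul_nonneg hβ hb.1), ?_⟩
    have key : x + (α * a + β * b) • z
        = α • (x + a • z) + β • (x + b • z) := by
      have : α • (x + a • z) + β • (x + b • z)
          = (α + β) • x + (α * a + β * b) • z := by module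
      rw [this, hαβ, one_smul]
    rw [show α • a + β • b = α * a + β * b from rfl, key]
    exact hKconv ha.2 hb.2 hα hβ hαβ
  have hsup : sSup S ∈ S := hcl.csSup_mem ⟨0, h0⟩ hbdd
  ext t
  constructor
  · exact fun ht => ⟨ht.1, le_csSup hbdd ht⟩
  · exact fun ht => hconvS.ordConnected.out h0 hsup ht

lemma measurableSet_vadd' {d : ℕ} {A : Set (EuclideanSpace ℝ (Fin d))}
    (hA : MeasurableSet A) (w : EuclideanSpace ℝ (Fin d)) : MeasurableSet (w +ᵥ A) := by
  have : (w +ᵥ A) = (fun y => y - w) ⁻¹' A := by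
    ext y
    simp [Set.mem_vadd_set_iff_neg_vadd_mem, vadd_eq_add, sub_eq_neg_add]
  rw [this]
  exact hA.preimage (measurable_id.sub_const w)

lemma vol_diff_vadd_symm {d : ℕ} {A : Set (EuclideanSpace ℝ (Fin d))} (hA : MeasurableSet A)
    (hfin : volume A ≠ ⊤) (v : EuclideanSpace ℝ (Fin d)) :
    volume (A \ (v +ᵥ A)) = volume (A \ ((-v) +ᵥ A)) := by
  have key : ∀ w : EuclideanSpace ℝ (Fin d),
      volume (A \ (w +ᵥ A)) = volume A - volume (A ∩ (w +ᵥ A)) := by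
    intro w
    rw [← Set.diff_self_inter]
    exact measure_diff Set.inter_subset_left
      ((hA.inter (measurableSet_vadd' hA w)).nullMeasurableSet)
      ((lt_of_le_of_lt (measure_mono Set.inter_subset_left) hfin.lt_top).ne)
  rw [key v, key (-v)]
  congr 1
  calc volume (A ∩ (v +ᵥ A)) = volume ((-v) +ᵥ (A ∩ (v +ᵥ A))) :=
        (measure_vadd (μ := volume) (-v) _).symm
    _ = volume (A ∩ ((-v) +ᵥ A)) := by
        rw [Set.vadd_set_inter, vadd_vadd, neg_add_cancel, zero_vadd, Set.inter_comm]

lemma lintegral_image_eq_lintegral_abs_deriv_mul' {s : Set ℝ} {f f' : ℝ → ℝ}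
    (hs : MeasurableSet s) (hf' : ∀ x ∈ s, HasDerivWithinAt f (f' x) s x)
    (hf : Set.InjOn f s) (g : ℝ → ℝ≥0∞) :
    ∫⁻ x in f '' s, g x = ∫⁻ x in s, ENNReal.ofReal |f' x| * g (f x) := by
  simpa only [ContinuousLinearMap.det_toSpanSingleton] using
    lintegral_image_eq_lintegral_abs_det_fderiv_mul volume hs
      (fun x hx => (hf' x hx).hasFDerivWithinAt) hf g

lemma smul_vadd_set {d : ℕ} (c : ℝ) (w : EuclideanSpace ℝ (Fin d))
    (S : Set (EuclideanSpace ℝ (Fin d))) : c • (w +ᵥ S) = (c • w) +ᵥ (c • S) := by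
  ext x
  constructor
  · rintro ⟨y, ⟨k, hk, rfl⟩, rfl⟩
    exact ⟨c • k, ⟨k, hk, rfl⟩, by simp [smul_add, vadd_eq_add]⟩
  · rintro ⟨y, ⟨k, hk, rfl⟩, rfl⟩
    exact ⟨w + k, ⟨k, hk, rfl⟩, by simp [smul_add, vadd_eq_add]⟩

set_option maxHeartbeats 1000000 in
theorem stmt17 {d : ℕ} {Ω : Type*} [MeasurableSpace Ω]
    (P : Measure Ω) [IsProbabilityMeasure P]
    (K : Set (EuclideanSpace ℝ (Fin d)))
    (hKconv : Convex ℝ K) (hKcomp : IsCompact K) (hKint : (interior K).Nonempty)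
    (H : ℝ) (hH : H ∈ Set.Ioo (0 : ℝ) (1 / 2))
    (ξ : EuclideanSpace ℝ (Fin d) → Ω → ℝ)
    -- the Poisson isometry: the variance of the Poisson integral `ξ(z)` equals the
    -- `ν_H`-integral of the squared integrand
    (hVar : ∀ z, ∫ ω, (ξ z ω) ^ 2 ∂P
      = ∫ r in Set.Ioi (0 : ℝ),
          (volume (symmDiff (z +ᵥ r • K) (r • K))).toReal
            * r ^ (-(d : ℝ) - 1 + 2 * H)) :
    ∀ z : EuclideanSpace ℝ (Fin d), ‖z‖ = 1 →
      ∫ ω, (ξ z ω) ^ 2 ∂P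
        = ((volume K).toReal / H)
            * (((1 / (volume K).toReal)
                * ∫ x in K,
                    (sSup {t : ℝ | 0 ≤ t ∧ x + t • z ∈ K}) ^ (-(2 * H)))
                  ^ (-(1 : ℝ) / (-(2 * H)))) ^ (2 * H) := by
  classical
  intro z hz
  obtain ⟨hH0, hHhalf⟩ := hH
  have h2H : 0 < 2 * H := by linarith
  have hHne : H ≠ 0 := ne_of_gt hH0
  have hKmeas : MeasurableSet K := hKcomp.isClosed.measurableSet
  have hKfin : volume K ≠ ⊤ := hKcomp.measure_lt_top.ne
  -- abbreviation for the radial function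
  set ρ : EuclideanSpace ℝ (Fin d) → ℝ :=
    fun x => sSup {t : ℝ | 0 ≤ t ∧ x + t • z ∈ K} with hρdef
  have hIcc : ∀ x ∈ K, {t : ℝ | 0 ≤ t ∧ x + t • z ∈ K} = Set.Icc 0 (ρ x) :=
    fun x hx => S_eq_Icc hKconv hKcomp hz hx
  have hρ0 : ∀ x ∈ K, 0 ≤ ρ x := by
    intro x hx
    have h0m : (0:ℝ) ∈ Set.Icc 0 (ρ x) := by
      rw [← hIcc x hx]; exact ⟨le_refl 0, by simpa using hx⟩
    exact h0m.2
  have hmem : ∀ x ∈ K, ∀ s : ℝ, 0 ≤ s → (x + s • z ∈ K ↔ s ≤ ρ x) := by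
    intro x hx s hs
    constructor
    · intro h
      have hsm : s ∈ Set.Icc 0 (ρ x) := by rw [← hIcc x hx]; exact ⟨hs, h⟩
      exact hsm.2
    · intro h
      have hsm : s ∈ {t : ℝ | 0 ≤ t ∧ x + t • z ∈ K} := by
        rw [hIcc x hx]; exact ⟨hs, h⟩
      exact hsm.2
  have hvadd_mem : ∀ (s : ℝ) (x : EuclideanSpace ℝ (Fin d)),
      x ∈ ((-(s • z)) +ᵥ K) ↔ x + s • z ∈ K := by
    intro s x
    simp [Set.mem_vadd_set_iff_neg_vadd_mem, vadd_eq_add, add_comm]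
  -- the level-set description
  have hlevel : ∀ s : ℝ, K \ ((-(s • z)) +ᵥ K) = {x | x ∈ K ∧ x + s • z ∉ K} := by
    intro s; ext x
    simp only [Set.mem_diff, Set.mem_setOf_eq, hvadd_mem]

  -- scaled bodies are compact
  have hsmulK_compact : ∀ c : ℝ, IsCompact (c • K) := by
    intro c
    rw [← Set.image_smul]
    exact hKcomp.image (continuous_const_smul c)
  -- abbreviation for the translated-difference volume
  set G : ℝ → ℝ≥0∞ := fun s => volume (K \ ((-(s • z)) +ᵥ K)) with hGdef
  have hGfin : ∀ s : ℝ, G s ≠ ⊤ :=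
    fun s => (lt_of_le_of_lt (measure_mono Set.diff_subset) hKfin.lt_top).ne
  -- pointwise identity for the symmetric difference volume
  have hptwise : ∀ r : ℝ, 0 < r →
      volume (symmDiff (z +ᵥ r • K) (r • K))
        = 2 * (ENNReal.ofReal (r ^ (d : ℕ)) * G r⁻¹) := by
    intro r hr
    have hBmeas : MeasurableSet (r • K) := (hsmulK_compact r).isClosed.measurableSet
    have hBfin : volume (r • K) ≠ ⊤ := (hsmulK_compact r).measure_lt_top.ne
    have hAB : (z +ᵥ r • K) \ (r • K) = z +ᵥ ((r • K) \ ((-z) +ᵥ (r • K))) := by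
      ext x
      simp [Set.mem_vadd_set_iff_neg_vadd_mem, vadd_eq_add, Set.mem_diff,
        neg_neg, add_neg_cancel_left]
    have e1 : volume ((z +ᵥ r • K) \ (r • K)) = volume ((r • K) \ (z +ᵥ (r • K))) := by
      rw [hAB, measure_vadd (μ := volume)]
      have h2 := vol_diff_vadd_symm hBmeas hBfin (-z)
      rwa [neg_neg] at h2
    have e2 : volume (symmDiff (z +ᵥ r • K) (r • K))
        = 2 * volume ((r • K) \ (z +ᵥ r • K)) := by
      rw [Set.symmDiff_def,
        measure_union disjoint_sdiff_sdiff (hBmeas.diff (measurableSet_vadd' hBmeas z)),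
        e1, two_mul]
    have hscale : (r • K) \ (z +ᵥ r • K) = r • (K \ ((r⁻¹ • z) +ᵥ K)) := by
      rw [Set.smul_set_sdiff₀ (ne_of_gt hr), smul_vadd_set, smul_inv_smul₀ (ne_of_gt hr)]
    have e3 : volume ((r • K) \ (z +ᵥ r • K))
        = ENNReal.ofReal (r ^ (d : ℕ)) * volume (K \ ((r⁻¹ • z) +ᵥ K)) := by
      rw [hscale, Measure.addHaar_smul_of_nonneg volume hr.le, finrank_euclideanSpace_fin]
    have e4 : volume (K \ ((r⁻¹ • z) +ᵥ K)) = G r⁻¹ :=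
      vol_diff_vadd_symm hKmeas hKfin (r⁻¹ • z)
    rw [e2, e3, e4]

  -- pointwise identity for the integrand
  have hpt2 : ∀ r : ℝ, r ∈ Ioi (0:ℝ) →
      ENNReal.ofReal ((volume (symmDiff (z +ᵥ r • K) (r • K))).toReal
          * r ^ (-(d : ℝ) - 1 + 2 * H))
        = 2 * (ENNReal.ofReal (r ^ (2 * H - 1)) * G r⁻¹) := by
    intro r hr
    have hr' : (0:ℝ) < r := hr
    have hfinsd : volume (symmDiff (z +ᵥ r • K) (r • K)) ≠ ⊤ := by
      rw [hptwise r hr']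
      exact ENNReal.mul_ne_top (by simp) (ENNReal.mul_ne_top ENNReal.ofReal_ne_top (hGfin r⁻¹))
    rw [ENNReal.ofReal_mul ENNReal.toReal_nonneg, ENNReal.ofReal_toReal hfinsd, hptwise r hr']
    have hrw : ENNReal.ofReal ((r:ℝ) ^ (d:ℕ)) * ENNReal.ofReal (r ^ (-(d:ℝ) - 1 + 2*H))
        = ENNReal.ofReal (r ^ (2*H - 1)) := by
      rw [← ENNReal.ofReal_mul (pow_nonneg hr'.le d)]
      congr 1
      rw [← Real.rpow_natCast r d, ← Real.rpow_add hr']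
      congr 1; ring
    calc 2 * (ENNReal.ofReal (r ^ (d:ℕ)) * G r⁻¹) * ENNReal.ofReal (r ^ (-(d:ℝ)-1+2*H))
        = 2 * ((ENNReal.ofReal (r ^ (d:ℕ)) * ENNReal.ofReal (r ^ (-(d:ℝ)-1+2*H))) * G r⁻¹) := by
          ring
      _ = 2 * (ENNReal.ofReal (r ^ (2*H-1)) * G r⁻¹) := by rw [hrw]
  have hstepAB : (∫⁻ r in Ioi (0:ℝ), ENNReal.ofReal
        ((volume (symmDiff (z +ᵥ r • K) (r • K))).toReal * r ^ (-(d:ℝ) - 1 + 2*H)))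
      = 2 * ∫⁻ r in Ioi (0:ℝ), ENNReal.ofReal (r ^ (2*H - 1)) * G r⁻¹ := by
    rw [setLIntegral_congr_fun measurableSet_Ioi hpt2]
    exact lintegral_const_mul' 2 _ (by simp)
  -- change of variables r ↦ r⁻¹
  have hsubst : (∫⁻ s in Ioi (0:ℝ), ENNReal.ofReal (s ^ (-(2*H) - 1)) * G s)
      = ∫⁻ r in Ioi (0:ℝ), ENNReal.ofReal (r ^ (2*H - 1)) * G r⁻¹ := by
    have himg : (fun x : ℝ => x⁻¹) '' Ioi 0 = Ioi 0 := by
      ext x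
      constructor
      · rintro ⟨y, hy, rfl⟩; exact mem_Ioi.2 (inv_pos.2 (mem_Ioi.1 hy))
      · intro hx; exact ⟨x⁻¹, mem_Ioi.2 (inv_pos.2 (mem_Ioi.1 hx)), inv_inv x⟩
    have key := lintegral_image_eq_lintegral_abs_deriv_mul' (f := fun x : ℝ => x⁻¹)
      (f' := fun x => -((x^2)⁻¹)) measurableSet_Ioi
      (fun x hx => ((hasDerivAt_inv (ne_of_gt (mem_Ioi.1 hx))).hasDerivWithinAt))
      (fun a _ b _ hab => inv_injective hab)
      (fun s => ENNReal.ofReal (s ^ (-(2*H) - 1)) * G s)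
    rw [himg] at key
    rw [key]
    refine setLIntegral_congr_fun measurableSet_Ioi ?_
    intro r hr
    have hr' : (0:ℝ) < r := hr
    have h1 : |(-((r^2)⁻¹))| = (r^2)⁻¹ := by
      rw [abs_neg, abs_of_nonneg (by positivity)]
    beta_reduce
    rw [h1]
    have h2 : (r⁻¹) ^ (-(2*H) - 1) = r ^ (2*H + 1) := by
      rw [Real.inv_rpow hr'.le, ← Real.rpow_neg hr'.le]
      congr 1; ring
    have h3 : ((r^2)⁻¹ : ℝ) = r ^ (-2 : ℝ) := by
      rw [Real.rpow_neg hr'.le]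
      congr 1
      rw [← Real.rpow_natCast r 2]
      norm_num
    rw [h2, h3, ← mul_assoc, ← ENNReal.ofReal_mul (Real.rpow_nonneg hr'.le _),
      ← Real.rpow_add hr']
    congr 2
    ring

  -- Tonelli
  set T : Set (ℝ × EuclideanSpace ℝ (Fin d)) :=
    {p | p.2 ∈ K ∧ p.2 + p.1 • z ∉ K} with hTdef
  have hTmeas : MeasurableSet T := by
    have h1 : Measurable fun p : ℝ × EuclideanSpace ℝ (Fin d) => p.2 + p.1 • z := by fun_prop
    exact (measurable_snd hKmeas).inter (h1 hKmeas.compl)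
  have hGT : ∀ s : ℝ, G s = volume (Prod.mk s ⁻¹' T) := by
    intro s
    have h1 : Prod.mk s ⁻¹' T = {x | x ∈ K ∧ x + s • z ∉ K} := rfl
    rw [h1, ← hlevel s]
  have hindT : ∀ (s : ℝ) (x : EuclideanSpace ℝ (Fin d)),
      T.indicator (1 : ℝ × EuclideanSpace ℝ (Fin d) → ℝ≥0∞) (s, x)
        = (Prod.mk s ⁻¹' T).indicator 1 x := by
    intro s x
    by_cases h : (s, x) ∈ T <;> simp [Set.indicator, h]
  have hfr : ∀ᵐ x : EuclideanSpace ℝ (Fin d) ∂volume, x ∉ frontier K := by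
    have h0 := hKconv.addHaar_frontier (volume)
    exact ae_iff.mpr (by simpa using h0)
  have hinner : ∀ᵐ x : EuclideanSpace ℝ (Fin d) ∂volume,
      (∫⁻ s in Ioi (0:ℝ), ENNReal.ofReal (s ^ (-(2*H) - 1)) * T.indicator 1 (s, x))
        = K.indicator (fun y => ENNReal.ofReal (ρ y ^ (-(2*H)) / (2*H))) x := by
    filter_upwards [hfr] with x hxfr
    by_cases hxK : x ∈ K
    · have hxint : x ∈ interior K := by
        have hcl : x ∈ closure K := subset_closure hxK
        rw [closure_eq_interior_union_frontier K] at hcl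
        rcases hcl with h | h
        · exact h
        · exact absurd h hxfr
      have hρpos : 0 < ρ x := by
        rcases Metric.isOpen_iff.1 isOpen_interior x hxint with ⟨ε, hε, hball⟩
        have hmemε : x + (ε/2) • z ∈ K := by
          apply interior_subset
          apply hball
          have : dist (x + (ε/2) • z) x = ε/2 := by
            simp [dist_eq_norm, norm_smul, hz, abs_of_nonneg (by positivity : (0:ℝ) ≤ ε/2), abs_of_pos hε]
          rw [Metric.mem_ball, this]
          linarith
        have := (hmem x hxK (ε/2) (by positivity)).1 hmemε
        linarith
      rw [Set.indicator_of_mem hxK]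
      have hind : ∀ s, s ∈ Ioi (0:ℝ) →
          ENNReal.ofReal (s ^ (-(2*H) - 1)) * T.indicator 1 (s, x)
            = (Ioi (ρ x)).indicator (fun s => ENNReal.ofReal (s ^ (-(2*H) - 1))) s := by
        intro s hs
        have hs' : (0:ℝ) < s := hs
        by_cases hsmem : s ∈ Ioi (ρ x)
        · rw [Set.indicator_of_mem hsmem]
          have hTm : (s, x) ∈ T := by
            refine ⟨hxK, fun hmem' => ?_⟩
            have := (hmem x hxK s hs'.le).1 hmem'
            exact absurd this (not_le.2 hsmem)
          rw [Set.indicator_of_mem hTm]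
          simp
        · rw [Set.indicator_of_notMem hsmem]
          have hsle : s ≤ ρ x := not_lt.1 hsmem
          have hTm : (s, x) ∉ T := fun hT => hT.2 ((hmem x hxK s hs'.le).2 hsle)
          rw [Set.indicator_of_notMem hTm, mul_zero]
      rw [setLIntegral_congr_fun measurableSet_Ioi hind,
        lintegral_indicator measurableSet_Ioi,
        Measure.restrict_restrict measurableSet_Ioi,
        Set.inter_eq_self_of_subset_left (Ioi_subset_Ioi (hρ0 x hxK))]
      have hlt : -(2*H) - 1 < -1 := by linarith
      have hint : IntegrableOn (fun s : ℝ => s ^ (-(2*H)-1)) (Ioi (ρ x)) :=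
        integrableOn_Ioi_rpow_of_lt hlt hρpos
      have hnn : 0 ≤ᵐ[volume.restrict (Ioi (ρ x))] fun s : ℝ => s ^ (-(2*H)-1) :=
        (ae_restrict_iff' measurableSet_Ioi).2 (ae_of_all _ fun s hs =>
          Real.rpow_nonneg (le_of_lt (lt_trans hρpos hs)) _)
      rw [← ofReal_integral_eq_lintegral_ofReal hint hnn,
        integral_Ioi_rpow_of_lt hlt hρpos]
      congr 1
      rw [show -(2*H) - 1 + 1 = -(2*H) by ring, neg_div_neg_eq]
    · rw [Set.indicator_of_notMem hxK]
      have hz0 : ∀ s : ℝ, T.indicator (1 : ℝ × EuclideanSpace ℝ (Fin d) → ℝ≥0∞) (s, x) = 0 :=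
        fun s => Set.indicator_of_notMem (fun h => hxK h.1) _
      simp [hz0]
  have hTonelli : (∫⁻ s in Ioi (0:ℝ), ENNReal.ofReal (s ^ (-(2*H) - 1)) * G s)
      = ∫⁻ x in K, ENNReal.ofReal (ρ x ^ (-(2*H)) / (2*H)) := by
    have hswap : (∫⁻ s in Ioi (0:ℝ),
          ∫⁻ x, ENNReal.ofReal (s ^ (-(2*H) - 1)) * T.indicator 1 (s, x) ∂volume)
        = ∫⁻ x, ∫⁻ s in Ioi (0:ℝ),
            ENNReal.ofReal (s ^ (-(2*H) - 1)) * T.indicator 1 (s, x) ∂volume := by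
      apply lintegral_lintegral_swap
      have m1 : Measurable fun p : ℝ × EuclideanSpace ℝ (Fin d) =>
          ENNReal.ofReal (p.1 ^ (-(2*H)-1)) := by fun_prop
      have m2 : Measurable fun p : ℝ × EuclideanSpace ℝ (Fin d) =>
          T.indicator (1 : ℝ × EuclideanSpace ℝ (Fin d) → ℝ≥0∞) p :=
        measurable_one.indicator hTmeas
      exact (m1.mul m2).aemeasurable
    calc (∫⁻ s in Ioi (0:ℝ), ENNReal.ofReal (s ^ (-(2*H) - 1)) * G s)
        = ∫⁻ s in Ioi (0:ℝ),
            ∫⁻ x, ENNReal.ofReal (s ^ (-(2*H) - 1)) * T.indicator 1 (s, x) ∂volume := by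
          refine setLIntegral_congr_fun measurableSet_Ioi (fun s _ => ?_)
          rw [lintegral_const_mul' _ _ ENNReal.ofReal_ne_top]
          congr 1
          rw [hGT s, ← lintegral_indicator_one (measurable_prodMk_left hTmeas)]
          exact lintegral_congr fun x => (hindT s x).symm
      _ = ∫⁻ x, ∫⁻ s in Ioi (0:ℝ),
            ENNReal.ofReal (s ^ (-(2*H) - 1)) * T.indicator 1 (s, x) ∂volume := hswap
      _ = ∫⁻ x, K.indicator (fun y => ENNReal.ofReal (ρ y ^ (-(2*H)) / (2*H))) x :=
          lintegral_congr_ae hinner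
      _ = ∫⁻ x in K, ENNReal.ofReal (ρ x ^ (-(2*H)) / (2*H)) := lintegral_indicator hKmeas _
  have hconst : (∫⁻ x in K, ENNReal.ofReal (ρ x ^ (-(2*H)) / (2*H)))
      = ENNReal.ofReal (2*H)⁻¹ * ∫⁻ x in K, ENNReal.ofReal (ρ x ^ (-(2*H))) := by
    rw [← lintegral_const_mul' _ _ ENNReal.ofReal_ne_top]
    refine lintegral_congr fun x => ?_
    rw [← ENNReal.ofReal_mul (inv_nonneg.2 h2H.le)]
    congr 1
    rw [div_eq_mul_inv, mul_comm]

  -- measurability of the symmetric-difference volume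
  set T2 : Set (ℝ × EuclideanSpace ℝ (Fin d)) :=
    {p | (p.1⁻¹ • (p.2 - z) ∈ K ∧ p.1⁻¹ • p.2 ∉ K)
      ∨ (p.1⁻¹ • p.2 ∈ K ∧ p.1⁻¹ • (p.2 - z) ∉ K)} with hT2def
  have m1 : Measurable fun p : ℝ × EuclideanSpace ℝ (Fin d) => p.1⁻¹ • (p.2 - z) := by
    fun_prop
  have m2 : Measurable fun p : ℝ × EuclideanSpace ℝ (Fin d) => p.1⁻¹ • p.2 := by fun_prop
  have hT2meas : MeasurableSet T2 :=
    ((m1 hKmeas).inter (m2 hKmeas.compl)).union ((m2 hKmeas).inter (m1 hKmeas.compl))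
  have hT2eq : ∀ r ∈ Ioi (0:ℝ), Prod.mk r ⁻¹' T2 = symmDiff (z +ᵥ r • K) (r • K) := by
    intro r hr
    have hrne : r ≠ 0 := ne_of_gt (mem_Ioi.1 hr)
    ext x
    have e1 : x ∈ z +ᵥ r • K ↔ r⁻¹ • (x - z) ∈ K := by
      rw [Set.mem_vadd_set_iff_neg_vadd_mem, vadd_eq_add, neg_add_eq_sub]
      exact Set.mem_smul_set_iff_inv_smul_mem₀ hrne _ _
    have e2 : x ∈ r • K ↔ r⁻¹ • x ∈ K := Set.mem_smul_set_iff_inv_smul_mem₀ hrne _ _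
    simp only [Set.mem_preimage, Set.mem_setOf_eq, symmDiff_def, Set.sup_eq_union,
      Set.mem_union, Set.mem_diff, e1, e2]
    exact Iff.rfl
  have hmeasV : AEMeasurable (fun r : ℝ => volume (symmDiff (z +ᵥ r • K) (r • K)))
      (volume.restrict (Ioi (0:ℝ))) := by
    refine (measurable_measure_prodMk_left (ν := volume) hT2meas).aemeasurable.congr ?_
    exact (ae_restrict_iff' measurableSet_Ioi).2 (ae_of_all _ fun r hr => congrArg volume (hT2eq r hr))
  have hbLHS : ∫ r in Ioi (0:ℝ),
        (volume (symmDiff (z +ᵥ r • K) (r • K))).toReal * r ^ (-(d:ℝ) - 1 + 2*H)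
      = (∫⁻ r in Ioi (0:ℝ), ENNReal.ofReal
          ((volume (symmDiff (z +ᵥ r • K) (r • K))).toReal * r ^ (-(d:ℝ) - 1 + 2*H))).toReal := by
    rw [integral_eq_lintegral_of_nonneg_ae]
    · exact (ae_restrict_iff' measurableSet_Ioi).2 (ae_of_all _ fun r hr =>
        mul_nonneg ENNReal.toReal_nonneg (Real.rpow_nonneg (le_of_lt hr) _))
    · exact (hmeasV.ennreal_toReal.mul
        ((by fun_prop : Measurable fun r : ℝ => r ^ (-(d:ℝ)-1+2*H)).aemeasurable)).aestronglyMeasurable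
  -- measurability of ρ on K
  have hρ'meas : Measurable (fun x : EuclideanSpace ℝ (Fin d) => if x ∈ K then ρ x else 0) := by
    apply measurable_of_Ioi
    intro a
    rcases lt_or_ge a 0 with ha | ha
    · convert MeasurableSet.univ
      ext x
      simp only [Set.mem_preimage, Set.mem_Ioi, Set.mem_univ, iff_true]
      split_ifs with h
      · exact lt_of_lt_of_le ha (hρ0 x h)
      · exact ha
    · have hset : (fun x : EuclideanSpace ℝ (Fin d) => if x ∈ K then ρ x else 0) ⁻¹' Set.Ioi a
          = ⋃ n : ℕ, (K ∩ ((-((a + ((n:ℝ)+1)⁻¹) • z)) +ᵥ K)) := by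
        ext x
        simp only [Set.mem_preimage, Set.mem_Ioi, Set.mem_iUnion, Set.mem_inter_iff, hvadd_mem]
        constructor
        · intro hx
          by_cases hxK : x ∈ K
          · rw [if_pos hxK] at hx
            obtain ⟨n, hn⟩ := exists_nat_one_div_lt (show 0 < ρ x - a by linarith)
            refine ⟨n, hxK, ?_⟩
            rw [one_div] at hn
            have hs0 : (0:ℝ) ≤ a + ((n:ℝ)+1)⁻¹ := add_nonneg ha (by positivity)
            exact (hmem x hxK _ hs0).2 (by linarith)
          · rw [if_neg hxK] at hx; linarith
        · rintro ⟨n, hxK, hxm⟩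
          rw [if_pos hxK]
          have h1 := (hmem x hxK _ (add_nonneg ha (by positivity))).1 hxm
          have hpos : (0:ℝ) < ((n:ℝ)+1)⁻¹ := by positivity
          linarith
      rw [hset]
      exact MeasurableSet.iUnion fun n => hKmeas.inter (measurableSet_vadd' hKmeas _)
  have hRHSae : (fun x => (if x ∈ K then ρ x else 0) ^ (-(2*H)))
      =ᵐ[volume.restrict K] (fun x => ρ x ^ (-(2*H))) :=
    (ae_restrict_iff' hKmeas).2 (ae_of_all _ fun x hx => by simp [hx])
  have hbRHS : ∫ x in K, ρ x ^ (-(2*H))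
      = (∫⁻ x in K, ENNReal.ofReal (ρ x ^ (-(2*H)))).toReal := by
    rw [integral_eq_lintegral_of_nonneg_ae]
    · exact (ae_restrict_iff' hKmeas).2 (ae_of_all _ fun x hx =>
        Real.rpow_nonneg (hρ0 x hx) _)
    · exact ((by fun_prop : Measurable fun x : EuclideanSpace ℝ (Fin d) =>
        (if x ∈ K then ρ x else 0) ^ (-(2*H))).aemeasurable.congr hRHSae).aestronglyMeasurable
  -- positivity of the volume
  have hVpos : 0 < (volume K).toReal := by
    refine ENNReal.toReal_pos ?_ hKfin
    have h1 : 0 < volume (interior K) := isOpen_interior.measure_pos volume hKint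
    exact (lt_of_lt_of_le h1 (measure_mono interior_subset)).ne'
  have hInonneg : 0 ≤ ∫ x in K, ρ x ^ (-(2*H)) :=
    setIntegral_nonneg hKmeas fun x hx => Real.rpow_nonneg (hρ0 x hx) _
  -- assembling everything
  have hgoal_eq : (∫ x in K, (sSup {t : ℝ | 0 ≤ t ∧ x + t • z ∈ K}) ^ (-(2*H)))
      = ∫ x in K, ρ x ^ (-(2*H)) := rfl
  have hA0 : 0 ≤ 1 / (volume K).toReal * ∫ x in K, ρ x ^ (-(2*H)) :=
    mul_nonneg (by positivity) hInonneg
  have hrpow : ((1 / (volume K).toReal * ∫ x in K, ρ x ^ (-(2*H)))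
        ^ ((-(1:ℝ)) / (-(2*H)))) ^ (2*H)
      = 1 / (volume K).toReal * ∫ x in K, ρ x ^ (-(2*H)) := by
    rw [← Real.rpow_mul hA0, show (-(1:ℝ))/(-(2*H)) * (2*H) = 1 by field_simp,
      Real.rpow_one]
  rw [hVar z, hgoal_eq, hrpow]
  have hRHSsimp : (volume K).toReal / H
        * (1 / (volume K).toReal * ∫ x in K, ρ x ^ (-(2*H)))
      = 2 * ((2*H)⁻¹ * ∫ x in K, ρ x ^ (-(2*H))) := by
    field_simp
  rw [hRHSsimp, hbLHS, hstepAB, ← hsubst, hTonelli, hconst, hbRHS,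
    ENNReal.toReal_mul, ENNReal.toReal_mul, ENNReal.toReal_ofReal (inv_nonneg.2 h2H.le)]
  norm_num
end
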